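/- arXiv:1712.00827 — 5 statements merged into one kernel-verified Lean document; each statement's English description precedes it below -/
import Mathlib

section
/- For every operator σ_{AB} in PPT'(A:B) (i.e., σ ≥ 0 and ||T_B(σ)||_1 ≤ 1) and the maximally entangled state Φ_{AB} = (1/M)|Υ⟩⟨Υ|_{AB} of Schmidt rank M, one has Tr(Φ_{AB} σ_{AB}) ≤ 1/M. -/
open Matrix
open scoped ComplexOrder

variable {ι : Type} [Fintype ι] [DecidableEq ι] [Nonempty ι]

/-- Partial transpose on the second (B) tensor factor. -/
def partialTransposeB (Q : Matrix (ι × ι) (ι × ι) ℂ) : Matrix (ι × ι) (ι × ι) ℂ :=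
  Matrix.of fun p q => Q (p.1, q.2) (q.1, p.2)

/-- The trace norm `‖A‖₁ = Tr √(A†A)`. -/
noncomputable def traceNorm (A : Matrix (ι × ι) (ι × ι) ℂ) : ℝ :=
  (((Matrix.isHermitian_conjTranspose_mul_self A).eigenvectorUnitary : Matrix (ι × ι) (ι × ι) ℂ) *
    diagonal (((↑) : ℝ → ℂ) ∘ (√·) ∘ (Matrix.isHermitian_conjTranspose_mul_self A).eigenvalues) *
    (star (Matrix.isHermitian_conjTranspose_mul_self A).eigenvectorUnitary :
      Matrix (ι × ι) (ι × ι) ℂ)).trace.re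

/-- The maximally entangled state `Φ_{AB} = (1/M)|Υ⟩⟨Υ|` of Schmidt rank
`M = dim H_A = dim H_B`. -/
noncomputable def maxEntState : Matrix (ι × ι) (ι × ι) ℂ :=
  ((Fintype.card ι : ℂ))⁻¹ •
    Matrix.of fun p q => if p.1 = p.2 ∧ q.1 = q.2 then (1 : ℂ) else 0

set_option linter.unusedSectionVars false in
lemma sum_abs_sq_eq_re_dot (v : (ι × ι) → ℂ) :
    ∑ p, ‖v p‖ ^ 2 = (dotProduct (star v) v).re := by
  rw [dotProduct, Complex.re_sum]
  refine Finset.sum_congr rfl fun p _ => ?_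
  simp [Complex.sq_norm, Complex.normSq_apply, Complex.mul_re]

lemma re_dot_le_sum_abs (a b : (ι × ι) → ℂ) :
    (dotProduct (star a) b).re ≤ ∑ p, ‖a p‖ * ‖b p‖ := by
  rw [dotProduct, Complex.re_sum]
  refine Finset.sum_le_sum fun p _ => ?_
  calc ((star a) p * b p).re ≤ ‖(star a) p * b p‖ := Complex.re_le_norm _
    _ = ‖a p‖ * ‖b p‖ := by
        rw [Pi.star_apply, norm_mul]
        simp [RCLike.star_def, Complex.norm_conj]

lemma re_swap_sum_le_traceNorm (Y : Matrix (ι × ι) (ι × ι) ℂ) :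
    (∑ p : ι × ι, Y (p.2, p.1) p).re ≤ traceNorm Y := by
  have hH : (Yᴴ * Y).PosSemidef := Matrix.posSemidef_conjTranspose_mul_self Y
  have hHe : (Yᴴ * Y).IsHermitian := hH.1
  set u : (ι × ι) → (ι × ι) → ℂ := fun k => ⇑(hHe.eigenvectorBasis k) with hu
  -- eigenvectors are unit vectors
  have hnorm : ∀ k, ∑ p, ‖u k p‖ ^ 2 = 1 := by
    intro k
    have h1 : ‖hHe.eigenvectorBasis k‖ = 1 := hHe.eigenvectorBasis.orthonormal.1 k
    rw [EuclideanSpace.norm_eq] at h1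
    have h2 := congrArg (· ^ 2) h1
    simpa [Real.sq_sqrt (Finset.sum_nonneg fun i _ => sq_nonneg _)] using h2
  -- ∑ |Y u|² = eigenvalue
  have hev : ∀ k, ∑ p, ‖(Y *ᵥ u k) p‖ ^ 2 = hHe.eigenvalues k := by
    intro k
    rw [sum_abs_sq_eq_re_dot]
    have h1 : dotProduct (star (Y *ᵥ u k)) (Y *ᵥ u k)
        = dotProduct (star (u k)) ((Yᴴ * Y) *ᵥ u k) := by
      rw [star_mulVec, dotProduct_mulVec, Matrix.vecMul_vecMul,
        dotProduct_mulVec]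
    rw [h1, hHe.mulVec_eigenvectorBasis]
    have h2 : dotProduct (star (u k)) (hHe.eigenvalues k • u k)
        = (hHe.eigenvalues k : ℂ) * dotProduct (star (u k)) (u k) := by
      rw [dotProduct_smul, Complex.real_smul]
    rw [h2, Complex.re_ofReal_mul, ← sum_abs_sq_eq_re_dot, hnorm k, mul_one]
  -- unitarity of the eigenvector matrix
  have hUU : (hHe.eigenvectorUnitary : Matrix (ι × ι) (ι × ι) ℂ) *
      (star hHe.eigenvectorUnitary : Matrix (ι × ι) (ι × ι) ℂ) = 1 :=
    Matrix.mem_unitaryGroup_iff.mp hHe.eigenvectorUnitary.2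
  have horth : ∀ a b : ι × ι, ∑ k, (starRingEnd ℂ) (u k a) * u k b
      = if b = a then 1 else 0 := by
    intro a b
    have h := congrArg (fun M : Matrix (ι × ι) (ι × ι) ℂ => M b a) hUU
    simp only [Matrix.mul_apply, Matrix.one_apply] at h ⊢
    rw [← h]
    refine Finset.sum_congr rfl fun k _ => ?_
    simp [Matrix.conjTranspose_apply, hu]
    ring
  -- express the swap sum through the eigenbasis
  have hswap : ∑ p : ι × ι, Y (p.2, p.1) p
      = ∑ k, dotProduct (star fun p => u k (p.2, p.1)) (Y *ᵥ u k) := by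
    have e1 : ∀ k, dotProduct (star fun p => u k (p.2, p.1)) (Y *ᵥ u k)
        = ∑ p : ι × ι, ∑ q : ι × ι, (starRingEnd ℂ) (u k (p.2, p.1)) * (Y p q * u k q) := by
      intro k
      simp [dotProduct, Matrix.mulVec, Finset.mul_sum]
    rw [Finset.sum_congr rfl fun k _ => e1 k]
    rw [Finset.sum_comm]
    have e2 : ∀ p : ι × ι, ∑ k, ∑ q : ι × ι, (starRingEnd ℂ) (u k (p.2, p.1)) * (Y p q * u k q)
        = Y p (p.2, p.1) := by
      intro p
      rw [Finset.sum_comm]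
      have e3 : ∀ q : ι × ι, ∑ k, (starRingEnd ℂ) (u k (p.2, p.1)) * (Y p q * u k q)
          = Y p q * (if q = (p.2, p.1) then 1 else 0) := by
        intro q
        rw [← horth (p.2, p.1) q, Finset.mul_sum]
        refine Finset.sum_congr rfl fun k _ => by ring
      rw [Finset.sum_congr rfl fun q _ => e3 q]
      simp
    rw [Finset.sum_congr rfl fun p _ => e2 p]
    exact (Fintype.sum_equiv (Equiv.prodComm ι ι) _ _ fun p => rfl)
  -- trace norm equals sum of square roots of eigenvalues
  have htn : traceNorm Y = ∑ k, Real.sqrt (hHe.eigenvalues k) := by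
    rw [traceNorm, Matrix.trace_mul_cycle,
      Matrix.mem_unitaryGroup_iff'.mp hHe.eigenvectorUnitary.2, Matrix.one_mul,
      Matrix.trace_diagonal, Complex.re_sum]
    simp
  -- put it together
  rw [hswap, Complex.re_sum, htn]
  refine Finset.sum_le_sum fun k _ => ?_
  have h1 := re_dot_le_sum_abs (fun p => u k (p.2, p.1)) (Y *ᵥ u k)
  refine h1.trans ?_
  have ha : ∑ p : ι × ι, ‖u k (p.2, p.1)‖ ^ 2 = 1 := by
    rw [← hnorm k]
    exact Fintype.sum_equiv (Equiv.prodComm ι ι)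
      (fun p => ‖u k (p.2, p.1)‖ ^ 2) (fun p => ‖u k p‖ ^ 2)
      (fun p => rfl)
  have hcs := Finset.sum_mul_sq_le_sq_mul_sq Finset.univ
    (fun p => ‖u k (p.2, p.1)‖) (fun p => ‖(Y *ᵥ u k) p‖)
  rw [ha, hev k, one_mul] at hcs
  have hnn : 0 ≤ ∑ p : ι × ι, ‖u k (p.2, p.1)‖ * ‖(Y *ᵥ u k) p‖ :=
    Finset.sum_nonneg fun p _ => mul_nonneg (norm_nonneg _) (norm_nonneg _)
  exact (Real.le_sqrt hnn (hH.eigenvalues_nonneg k)).mpr hcs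

set_option linter.unusedSectionVars false in
/-- For every `σ ∈ PPT'(A:B)` (i.e. `σ ≥ 0` and `‖T_B(σ)‖₁ ≤ 1`), one has
`Tr(Φ_{AB} σ_{AB}) ≤ 1/M`. -/
theorem trace_maxEntState_le_of_mem_PPT' (σ : Matrix (ι × ι) (ι × ι) ℂ)
    (hσ : σ.PosSemidef) (hPPT' : traceNorm (partialTransposeB σ) ≤ 1) :
    ((maxEntState * σ).trace).re ≤ 1 / (Fintype.card ι : ℝ) := by
  have key := re_swap_sum_le_traceNorm (partialTransposeB σ)
  have hM : (0 : ℝ) < (Fintype.card ι : ℝ) := by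
    exact_mod_cast Fintype.card_pos
  have htr : (maxEntState * σ).trace
      = (Fintype.card ι : ℂ)⁻¹ * ∑ p : ι × ι, (partialTransposeB σ) (p.2, p.1) p := by
    rw [maxEntState, Matrix.smul_mul, Matrix.trace_smul, smul_eq_mul]
    congr 1
    simp [Matrix.trace, Matrix.diag, Matrix.mul_apply, partialTransposeB,
      Fintype.sum_prod_type, ite_and, ite_mul, Finset.sum_ite_eq]
  rw [htr]
  have hre : ((Fintype.card ι : ℂ)⁻¹ * ∑ p : ι × ι, (partialTransposeB σ) (p.2, p.1) p).re
      = (Fintype.card ι : ℝ)⁻¹ * (∑ p : ι × ι, (partialTransposeB σ) (p.2, p.1) p).re := by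
    rw [show ((Fintype.card ι : ℂ))⁻¹ = Complex.ofReal ((Fintype.card ι : ℝ)⁻¹) by
      push_cast; ring, Complex.re_ofReal_mul]
  rw [hre, one_div]
  calc (Fintype.card ι : ℝ)⁻¹ * (∑ p : ι × ι, (partialTransposeB σ) (p.2, p.1) p).re
      ≤ (Fintype.card ι : ℝ)⁻¹ * 1 :=
        mul_le_mul_of_nonneg_left (key.trans hPPT') (inv_nonneg.mpr hM.le)
    _ = (Fintype.card ι : ℝ)⁻¹ := mul_one _
end

section
/- The max-relative entropy D_max(ρ||σ) := log₂ inf{λ ≥ 0 : ρ ≤ λ σ} (with value +∞ if no such λ exists) is monotone under positive trace-preserving linear maps: for density operators ρ, σ and any positive trace-preserving map N, D_max(N(ρ)||N(σ)) ≤ D_max(ρ||σ). -/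
open Matrix
open scoped ComplexOrder Classical

/-- The max-relative entropy `D_max(ρ‖σ) = log₂ inf{λ ≥ 0 : ρ ≤ λσ}`, with value
`+∞` if no such `λ` exists.  Here `ρ ≤ λσ` means `λ•σ − ρ` is positive
semi-definite. -/
noncomputable def Dmax {n : Type} [Fintype n] [DecidableEq n]
    (ρ σ : Matrix n n ℂ) : EReal :=
  if _h : {l : ℝ | 0 ≤ l ∧ ((l : ℝ) • σ - ρ).PosSemidef}.Nonempty then
    ((Real.logb 2 (sInf {l : ℝ | 0 ≤ l ∧ ((l : ℝ) • σ - ρ).PosSemidef}) : ℝ) : EReal)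
  else ⊤

variable {n m : Type} [Fintype n] [DecidableEq n] [Fintype m] [DecidableEq m]

lemma trace_nonneg_of_psd {k : Type} [Fintype k] [DecidableEq k]
    {A : Matrix k k ℂ} (h : A.PosSemidef) : 0 ≤ A.trace := by
  rw [Matrix.trace]
  apply Finset.sum_nonneg
  intro i _
  have := h.dotProduct_mulVec_nonneg (Pi.single i 1)
  simpa [dotProduct, Matrix.mulVec, Pi.single_apply] using this

/-- The max-relative entropy is monotone under positive trace-preserving linear
maps: `D_max(N(ρ)‖N(σ)) ≤ D_max(ρ‖σ)`. -/
theorem Dmax_monotone_of_positive_tracePreserving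
    (N : Matrix n n ℂ →ₗ[ℂ] Matrix m m ℂ)
    (hpos : ∀ A : Matrix n n ℂ, A.PosSemidef → (N A).PosSemidef)
    (htp : ∀ A : Matrix n n ℂ, (N A).trace = A.trace)
    (ρ σ : Matrix n n ℂ) (hρ : ρ.PosSemidef) (hρtr : ρ.trace = 1)
    (hσ : σ.PosSemidef) :
    Dmax (N ρ) (N σ) ≤ Dmax ρ σ := by
  set S := {l : ℝ | 0 ≤ l ∧ ((l : ℝ) • σ - ρ).PosSemidef} with hS
  set T := {l : ℝ | 0 ≤ l ∧ ((l : ℝ) • (N σ) - (N ρ)).PosSemidef} with hT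
  have hsmul : ∀ (l : ℝ) (A : Matrix n n ℂ), N (l • A) = l • N A := by
    intro l A
    have h1 : l • A = ((l : ℂ)) • A := by
      ext i j; simp [Complex.real_smul]
    have h2 : ((l : ℂ)) • N A = l • N A := by
      ext i j; simp [Complex.real_smul]
    rw [h1, _root_.map_smul, h2]
  have hsub : S ⊆ T := by
    intro l hl
    refine ⟨hl.1, ?_⟩
    have := hpos _ hl.2
    rwa [map_sub, hsmul] at this
  unfold Dmax
  by_cases hSne : S.Nonempty
  · have hTne : T.Nonempty := hSne.mono hsub
    rw [dif_pos hSne, dif_pos hTne]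
    -- σ has positive real trace
    have htσ : 0 ≤ σ.trace := trace_nonneg_of_psd hσ
    -- every element of T is at least 1 / σ.trace.re
    have hTlb : ∀ l ∈ T, 1 ≤ l * σ.trace.re := by
      intro l hl
      have h0 : 0 ≤ ((l : ℝ) • (N σ) - (N ρ)).trace := trace_nonneg_of_psd hl.2
      rw [Matrix.trace_sub, Matrix.trace_smul, htp, htp, hρtr] at h0
      have hre : 0 ≤ (l • σ.trace - 1 : ℂ).re := h0.1
      simpa [Complex.real_smul, sub_nonneg] using hre
    have htσpos : 0 < σ.trace.re := by
      obtain ⟨l, hl⟩ := hTne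
      by_contra hc
      push_neg at hc
      have h1 := hTlb l hl
      nlinarith [hl.1]
    have hTlb' : ∀ l ∈ T, 1 / σ.trace.re ≤ l := by
      intro l hl
      rw [div_le_iff₀ htσpos]
      exact hTlb l hl
    have hTpos : 0 < sInf T := lt_of_lt_of_le (by positivity) (le_csInf hTne hTlb')
    have hbdd : BddBelow T := ⟨0, fun l hl => hl.1⟩
    have hle : sInf T ≤ sInf S := csInf_le_csInf hbdd hSne hsub
    have := Real.logb_le_logb_of_le (b := 2) one_lt_two hTpos hle
    exact_mod_cast this
  · rw [dif_neg hSne]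
    exact le_top
end

section
/- The max-relative entropy satisfies the triangle-type property under tensoring: for states ρ₁, σ₁ on H₁ and ρ₂, σ₂ on H₂, D_max(ρ₁ ⊗ ρ₂ || σ₁ ⊗ σ₂) = D_max(ρ₁||σ₁) + D_max(ρ₂||σ₂). -/
open Matrix
open scoped ComplexOrder Classical Kronecker

section DmaxAuxSection
set_option linter.unusedSectionVars false
namespace DmaxAux

variable {n n₁ n₂ : Type} [Fintype n] [DecidableEq n] [Fintype n₁] [DecidableEq n₁]
  [Fintype n₂] [DecidableEq n₂]

noncomputable def Q (M : Matrix n n ℂ) (x : n → ℂ) : ℂ := star x ⬝ᵥ M *ᵥ x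

lemma Q_nonneg {M : Matrix n n ℂ} (h : M.PosSemidef) (x : n → ℂ) : 0 ≤ Q M x := h.dotProduct_mulVec_nonneg x

lemma Q_real {M : Matrix n n ℂ} (h : M.PosSemidef) (x : n → ℂ) :
    Q M x = ((Q M x).re : ℂ) := by
  have := (Complex.nonneg_iff).mp (Q_nonneg h x)
  exact Complex.ext rfl this.2.symm

lemma Q_re_nonneg {M : Matrix n n ℂ} (h : M.PosSemidef) (x : n → ℂ) : 0 ≤ (Q M x).re :=
  ((Complex.nonneg_iff).mp (Q_nonneg h x)).1

lemma Q_smul_sub (l : ℝ) (σ ρ : Matrix n n ℂ) (x : n → ℂ) :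
    Q ((l : ℝ) • σ - ρ) x = (l : ℂ) * Q σ x - Q ρ x := by
  simp [Q, sub_mulVec, smul_mulVec, dotProduct_sub, dotProduct_smul,
    Complex.real_smul]

lemma kron_mulVec (A : Matrix n₁ n₁ ℂ) (B : Matrix n₂ n₂ ℂ) (v : n₁ → ℂ) (w : n₂ → ℂ) :
    (A ⊗ₖ B) *ᵥ (fun p => v p.1 * w p.2) = fun p => (A *ᵥ v) p.1 * (B *ᵥ w) p.2 := by
  funext p
  simp only [mulVec, dotProduct, kroneckerMap_apply, Fintype.sum_prod_type,
    Finset.sum_mul_sum]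
  apply Finset.sum_congr rfl; intro k _
  apply Finset.sum_congr rfl; intro m _
  ring

lemma Q_kron (A : Matrix n₁ n₁ ℂ) (B : Matrix n₂ n₂ ℂ) (v : n₁ → ℂ) (w : n₂ → ℂ) :
    Q (A ⊗ₖ B) (fun p => v p.1 * w p.2) = Q A v * Q B w := by
  simp only [Q, kron_mulVec, dotProduct, Fintype.sum_prod_type, Finset.sum_mul_sum,
    Pi.star_apply, star_mul']
  apply Finset.sum_congr rfl; intro k _
  apply Finset.sum_congr rfl; intro m _
  ring


lemma posSemidef_of_Q {M : Matrix n n ℂ} (h : M.IsHermitian) (hq : ∀ x, 0 ≤ Q M x) :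
    M.PosSemidef := .of_dotProduct_mulVec_nonneg h hq

lemma isHermitian_real_smul {M : Matrix n n ℂ} (h : M.IsHermitian) (r : ℝ) :
    ((r : ℝ) • M).IsHermitian := by
  unfold Matrix.IsHermitian at *
  ext i j
  have := congrFun (congrFun h i) j
  simp only [Matrix.conjTranspose_apply] at this
  simp [Matrix.conjTranspose_apply, this]

lemma posSemidef_real_smul {M : Matrix n n ℂ} (h : M.PosSemidef) {r : ℝ} (hr : 0 ≤ r) :
    ((r : ℝ) • M).PosSemidef := by
  refine .of_dotProduct_mulVec_nonneg (isHermitian_real_smul h.1 r) fun x => ?_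
  have : Q ((r : ℝ) • M) x = (r : ℂ) * Q M x := by
    simp [Q, smul_mulVec, dotProduct_smul, Complex.real_smul]
  rw [show star x ⬝ᵥ ((r : ℝ) • M) *ᵥ x = Q ((r : ℝ) • M) x from rfl, this]
  exact mul_nonneg (by exact_mod_cast Complex.zero_le_real.mpr hr) (Q_nonneg h x)

lemma conjTranspose_kron (A : Matrix n₁ n₁ ℂ) (B : Matrix n₂ n₂ ℂ) :
    (A ⊗ₖ B)ᴴ = Aᴴ ⊗ₖ Bᴴ := by
  ext p q
  simp [Matrix.conjTranspose_apply, kroneckerMap_apply, mul_comm]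

lemma posSemidef_kron {A : Matrix n₁ n₁ ℂ} {B : Matrix n₂ n₂ ℂ}
    (hA : A.PosSemidef) (hB : B.PosSemidef) : (A ⊗ₖ B).PosSemidef := by
  exact hA.kronecker hB

lemma Q_single {M : Matrix n n ℂ} (i : n) : Q M (Pi.single i 1) = M i i := by
  simp [Q, Matrix.mulVec_single, dotProduct, Pi.single_apply, apply_ite]

lemma diag_re_nonneg {M : Matrix n n ℂ} (h : M.PosSemidef) (i : n) : 0 ≤ (M i i).re := by
  have := Q_re_nonneg h (Pi.single i 1)
  rwa [Q_single] at this

lemma exists_diag_re_pos {M : Matrix n n ℂ} (h : M.PosSemidef) (htr : M.trace = 1) :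
    ∃ i, 0 < (M i i).re := by
  by_contra hc
  push_neg at hc
  have hsum : (Matrix.trace M).re = ∑ i, (M i i).re := by
    simp [Matrix.trace, Matrix.diag, Complex.re_sum]
  have h1 : (Matrix.trace M).re = 1 := by rw [htr]; simp
  have : (Matrix.trace M).re ≤ 0 := by
    rw [hsum]; exact Finset.sum_nonpos (fun i _ => hc i)
  linarith

def S (ρ σ : Matrix n n ℂ) : Set ℝ := {l : ℝ | 0 ≤ l ∧ ((l : ℝ) • σ - ρ).PosSemidef}

lemma S_bddBelow (ρ σ : Matrix n n ℂ) : BddBelow (S ρ σ) := ⟨0, fun _ hl => hl.1⟩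

lemma S_quad {ρ σ : Matrix n n ℂ} {l : ℝ} (hl : l ∈ S ρ σ) (x : n → ℂ) :
    (Q ρ x).re ≤ l * (Q σ x).re := by
  have h0 := Q_re_nonneg hl.2 x
  rw [Q_smul_sub] at h0
  simp only [Complex.sub_re, Complex.mul_re, Complex.ofReal_re, Complex.ofReal_im,
    zero_mul, sub_zero] at h0
  linarith

lemma mem_S_of_re {ρ σ : Matrix n n ℂ} (hρ : ρ.PosSemidef) (hσ : σ.PosSemidef) {l : ℝ}
    (hl : 0 ≤ l) (h : ∀ x, (Q ρ x).re ≤ l * (Q σ x).re) : l ∈ S ρ σ := by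
  refine ⟨hl, .of_dotProduct_mulVec_nonneg ((isHermitian_real_smul hσ.1 l).sub hρ.1) fun x => ?_⟩
  have hQ : Q ((l : ℝ) • σ - ρ) x = ((l * (Q σ x).re - (Q ρ x).re : ℝ) : ℂ) := by
    rw [Q_smul_sub, Q_real hσ x, Q_real hρ x]
    simp
  have : (0 : ℂ) ≤ Q ((l : ℝ) • σ - ρ) x := by
    rw [hQ]
    exact Complex.zero_le_real.mpr (by linarith [h x])
  exact this

lemma sInf_mem {ρ σ : Matrix n n ℂ} (hρ : ρ.PosSemidef) (hσ : σ.PosSemidef)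
    (h : (S ρ σ).Nonempty) : sInf (S ρ σ) ∈ S ρ σ := by
  have hμ0 : 0 ≤ sInf (S ρ σ) := le_csInf h fun l hl => hl.1
  apply mem_S_of_re hρ hσ hμ0
  intro x
  have ha : 0 ≤ (Q σ x).re := Q_re_nonneg hσ x
  have key : ∀ l ∈ S ρ σ, (Q ρ x).re ≤ l * (Q σ x).re := fun l hl => S_quad hl x
  rcases ha.lt_or_eq with hpos | h0
  · have hdiv : (Q ρ x).re / (Q σ x).re ≤ sInf (S ρ σ) :=
      le_csInf h fun l hl => (div_le_iff₀ hpos).mpr (by linarith [key l hl])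
    calc (Q ρ x).re = ((Q ρ x).re / (Q σ x).re) * (Q σ x).re := by field_simp
    _ ≤ sInf (S ρ σ) * (Q σ x).re := mul_le_mul_of_nonneg_right hdiv ha
  · obtain ⟨l, hl⟩ := h
    have := key l hl
    rw [← h0, mul_zero] at this
    rw [← h0, mul_zero]
    exact this

lemma sInf_S_pos {ρ σ : Matrix n n ℂ} (hρ : ρ.PosSemidef) (htr : ρ.trace = 1)
    (hσ : σ.PosSemidef) (h : (S ρ σ).Nonempty) : 0 < sInf (S ρ σ) := by
  have hmem := sInf_mem hρ hσ h
  rcases hmem.1.lt_or_eq with hlt | heq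
  · exact hlt
  · exfalso
    obtain ⟨i, hi⟩ := exists_diag_re_pos hρ htr
    have := S_quad hmem (Pi.single i 1)
    rw [Q_single, ← heq, zero_mul] at this
    linarith

variable {ρ₁ σ₁ : Matrix n₁ n₁ ℂ} {ρ₂ σ₂ : Matrix n₂ n₂ ℂ}

lemma mul_mem_S_kron (hρ₁ : ρ₁.PosSemidef) (hσ₁ : σ₁.PosSemidef) (hρ₂ : ρ₂.PosSemidef)
    (hσ₂ : σ₂.PosSemidef) {l₁ l₂ : ℝ} (h₁ : l₁ ∈ S ρ₁ σ₁) (h₂ : l₂ ∈ S ρ₂ σ₂) :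
    l₁ * l₂ ∈ S (ρ₁ ⊗ₖ ρ₂) (σ₁ ⊗ₖ σ₂) := by
  refine ⟨mul_nonneg h₁.1 h₂.1, ?_⟩
  have decomp : ((l₁ * l₂ : ℝ)) • (σ₁ ⊗ₖ σ₂) - ρ₁ ⊗ₖ ρ₂
      = ((l₁ : ℝ) • σ₁ - ρ₁) ⊗ₖ ((l₂ : ℝ) • σ₂) + ρ₁ ⊗ₖ ((l₂ : ℝ) • σ₂ - ρ₂) := by
    ext p q
    simp only [Matrix.sub_apply, Matrix.add_apply, Matrix.smul_apply, kroneckerMap_apply,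
      smul_eq_mul, Complex.real_smul]
    push_cast
    ring
  rw [decomp]
  exact (posSemidef_kron h₁.2 (posSemidef_real_smul hσ₂ h₂.1)).add
    (posSemidef_kron hρ₁ h₂.2)

lemma S_kron_quad (hρ₁ : ρ₁.PosSemidef) (hσ₁ : σ₁.PosSemidef) (hρ₂ : ρ₂.PosSemidef)
    (hσ₂ : σ₂.PosSemidef) {l : ℝ} (hl : l ∈ S (ρ₁ ⊗ₖ ρ₂) (σ₁ ⊗ₖ σ₂)) (v : n₁ → ℂ)
    (x : n₂ → ℂ) :
    (Q ρ₁ v).re * (Q ρ₂ x).re ≤ l * ((Q σ₁ v).re * (Q σ₂ x).re) := by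
  have h := S_quad hl (fun p => v p.1 * x p.2)
  rw [Q_kron, Q_kron, Q_real hρ₁ v, Q_real hρ₂ x, Q_real hσ₁ v, Q_real hσ₂ x,
    ← Complex.ofReal_mul, ← Complex.ofReal_mul, Complex.ofReal_re, Complex.ofReal_re] at h
  exact h

/-- left marginal ratio membership -/
lemma ratio_mem_left (hρ₁ : ρ₁.PosSemidef) (hσ₁ : σ₁.PosSemidef) (hρ₂ : ρ₂.PosSemidef)
    (hσ₂ : σ₂.PosSemidef) {l : ℝ} (hl : l ∈ S (ρ₁ ⊗ₖ ρ₂) (σ₁ ⊗ₖ σ₂)) {x : n₂ → ℂ}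
    (hx : 0 < (Q ρ₂ x).re) :
    l * (Q σ₂ x).re / (Q ρ₂ x).re ∈ S ρ₁ σ₁ := by
  apply mem_S_of_re hρ₁ hσ₁
    (div_nonneg (mul_nonneg hl.1 (Q_re_nonneg hσ₂ x)) hx.le)
  intro v
  have hk := S_kron_quad hρ₁ hσ₁ hρ₂ hσ₂ hl v x
  rw [div_mul_eq_mul_div, le_div_iff₀ hx]
  nlinarith [hk]

/-- right marginal ratio membership -/
lemma ratio_mem_right (hρ₁ : ρ₁.PosSemidef) (hσ₁ : σ₁.PosSemidef) (hρ₂ : ρ₂.PosSemidef)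
    (hσ₂ : σ₂.PosSemidef) {l : ℝ} (hl : l ∈ S (ρ₁ ⊗ₖ ρ₂) (σ₁ ⊗ₖ σ₂)) {v : n₁ → ℂ}
    (hv : 0 < (Q ρ₁ v).re) :
    l * (Q σ₁ v).re / (Q ρ₁ v).re ∈ S ρ₂ σ₂ := by
  apply mem_S_of_re hρ₂ hσ₂
    (div_nonneg (mul_nonneg hl.1 (Q_re_nonneg hσ₁ v)) hv.le)
  intro x
  have hk := S_kron_quad hρ₁ hσ₁ hρ₂ hσ₂ hl v x
  rw [div_mul_eq_mul_div, le_div_iff₀ hv]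
  nlinarith [hk]

lemma S_left_nonempty (hρ₁ : ρ₁.PosSemidef) (hσ₁ : σ₁.PosSemidef) (hρ₂ : ρ₂.PosSemidef)
    (hσ₂ : σ₂.PosSemidef) (hρ₂tr : ρ₂.trace = 1)
    (h : (S (ρ₁ ⊗ₖ ρ₂) (σ₁ ⊗ₖ σ₂)).Nonempty) : (S ρ₁ σ₁).Nonempty := by
  obtain ⟨l, hl⟩ := h
  obtain ⟨i, hi⟩ := exists_diag_re_pos hρ₂ hρ₂tr
  have hx : 0 < (Q ρ₂ (Pi.single i 1)).re := by rwa [Q_single]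
  exact ⟨_, ratio_mem_left hρ₁ hσ₁ hρ₂ hσ₂ hl hx⟩

lemma S_right_nonempty (hρ₁ : ρ₁.PosSemidef) (hσ₁ : σ₁.PosSemidef) (hρ₂ : ρ₂.PosSemidef)
    (hσ₂ : σ₂.PosSemidef) (hρ₁tr : ρ₁.trace = 1)
    (h : (S (ρ₁ ⊗ₖ ρ₂) (σ₁ ⊗ₖ σ₂)).Nonempty) : (S ρ₂ σ₂).Nonempty := by
  obtain ⟨l, hl⟩ := h
  obtain ⟨i, hi⟩ := exists_diag_re_pos hρ₁ hρ₁tr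
  have hv : 0 < (Q ρ₁ (Pi.single i 1)).re := by rwa [Q_single]
  exact ⟨_, ratio_mem_right hρ₁ hσ₁ hρ₂ hσ₂ hl hv⟩

lemma sInf_S_kron (hρ₁ : ρ₁.PosSemidef) (hρ₁tr : ρ₁.trace = 1) (hρ₂ : ρ₂.PosSemidef)
    (hρ₂tr : ρ₂.trace = 1) (hσ₁ : σ₁.PosSemidef) (hσ₂ : σ₂.PosSemidef)
    (h₁ : (S ρ₁ σ₁).Nonempty) (h₂ : (S ρ₂ σ₂).Nonempty) :
    sInf (S (ρ₁ ⊗ₖ ρ₂) (σ₁ ⊗ₖ σ₂)) = sInf (S ρ₁ σ₁) * sInf (S ρ₂ σ₂) := by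
  have hm₁ := sInf_mem hρ₁ hσ₁ h₁
  have hm₂ := sInf_mem hρ₂ hσ₂ h₂
  have hp₁ : 0 < sInf (S ρ₁ σ₁) := sInf_S_pos hρ₁ hρ₁tr hσ₁ h₁
  have hmul := mul_mem_S_kron hρ₁ hσ₁ hρ₂ hσ₂ hm₁ hm₂
  apply le_antisymm
  · exact csInf_le (S_bddBelow _ _) hmul
  · apply le_csInf ⟨_, hmul⟩
    intro l hl
    have hmem : l / sInf (S ρ₁ σ₁) ∈ S ρ₂ σ₂ := by
      apply mem_S_of_re hρ₂ hσ₂ (div_nonneg hl.1 hp₁.le)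
      intro x
      rcases (Q_re_nonneg hρ₂ x).lt_or_eq with hpos | h0
      · have hc := ratio_mem_left hρ₁ hσ₁ hρ₂ hσ₂ hl hpos
        have := csInf_le (S_bddBelow ρ₁ σ₁) hc
        rw [le_div_iff₀ hpos] at this
        rw [div_mul_eq_mul_div, le_div_iff₀ hp₁]
        linarith
      · rw [← h0]
        exact mul_nonneg (div_nonneg hl.1 hp₁.le) (Q_re_nonneg hσ₂ x)
    have := csInf_le (S_bddBelow ρ₂ σ₂) hmem
    rw [le_div_iff₀ hp₁] at this
    linarith

lemma Dmax_eq (ρ σ : Matrix n n ℂ) :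
    Dmax ρ σ = if _h : (S ρ σ).Nonempty then
      ((Real.logb 2 (sInf (S ρ σ)) : ℝ) : EReal) else ⊤ := rfl

lemma Dmax_ne_bot (ρ σ : Matrix n n ℂ) : Dmax ρ σ ≠ ⊥ := by
  rw [Dmax_eq]
  split
  · exact EReal.coe_ne_bot _
  · exact top_ne_bot

end DmaxAux
end DmaxAuxSection

open DmaxAux

variable {n₁ n₂ : Type} [Fintype n₁] [DecidableEq n₁] [Fintype n₂] [DecidableEq n₂]

/-- Additivity of the max-relative entropy under tensoring:
`D_max(ρ₁ ⊗ ρ₂ ‖ σ₁ ⊗ σ₂) = D_max(ρ₁‖σ₁) + D_max(ρ₂‖σ₂)`. -/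
theorem Dmax_kronecker
    (ρ₁ σ₁ : Matrix n₁ n₁ ℂ) (ρ₂ σ₂ : Matrix n₂ n₂ ℂ)
    (hρ₁ : ρ₁.PosSemidef) (hρ₁tr : ρ₁.trace = 1)
    (hρ₂ : ρ₂.PosSemidef) (hρ₂tr : ρ₂.trace = 1)
    (hσ₁ : σ₁.PosSemidef) (hσ₂ : σ₂.PosSemidef) :
    Dmax (ρ₁ ⊗ₖ ρ₂) (σ₁ ⊗ₖ σ₂) = Dmax ρ₁ σ₁ + Dmax ρ₂ σ₂ := by
  rw [Dmax_eq, Dmax_eq, Dmax_eq]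
  by_cases h₁ : (S ρ₁ σ₁).Nonempty
  · by_cases h₂ : (S ρ₂ σ₂).Nonempty
    · have h₁₂ : (S (ρ₁ ⊗ₖ ρ₂) (σ₁ ⊗ₖ σ₂)).Nonempty :=
        ⟨_, mul_mem_S_kron hρ₁ hσ₁ hρ₂ hσ₂ (sInf_mem hρ₁ hσ₁ h₁) (sInf_mem hρ₂ hσ₂ h₂)⟩
      rw [dif_pos h₁₂, dif_pos h₁, dif_pos h₂,
        sInf_S_kron hρ₁ hρ₁tr hρ₂ hρ₂tr hσ₁ hσ₂ h₁ h₂,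
        Real.logb_mul (sInf_S_pos hρ₁ hρ₁tr hσ₁ h₁).ne' (sInf_S_pos hρ₂ hρ₂tr hσ₂ h₂).ne']
      exact EReal.coe_add _ _
    · have h₁₂ : ¬ (S (ρ₁ ⊗ₖ ρ₂) (σ₁ ⊗ₖ σ₂)).Nonempty :=
        fun h => h₂ (S_right_nonempty hρ₁ hσ₁ hρ₂ hσ₂ hρ₁tr h)
      rw [dif_neg h₁₂, dif_neg h₂, dif_pos h₁, EReal.coe_add_top]
  · have h₁₂ : ¬ (S (ρ₁ ⊗ₖ ρ₂) (σ₁ ⊗ₖ σ₂)).Nonempty :=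
      fun h => h₁ (S_left_nonempty hρ₁ hσ₁ hρ₂ hσ₂ hρ₂tr h)
    rw [dif_neg h₁₂, dif_neg h₁]
    exact (EReal.top_add_of_ne_bot (by
      split
      · exact EReal.coe_ne_bot _
      · exact top_ne_bot)).symm
end

section
/- Monotonicity in α of the sandwiched Rényi relative entropy at α → ∞ endpoint: for any density operator ρ and positive semi-definite σ with supp(ρ) ⊆ supp(σ), and any α ∈ (1, ∞), the sandwiched Rényi relative entropy D̃_α(ρ||σ) = (1/(α−1)) log₂ Tr[(σ^{(1−α)/(2α)} ρ σ^{(1−α)/(2α)})^α] satisfies D̃_α(ρ||σ) ≤ D_max(ρ||σ), where D_max(ρ||σ) = log₂ inf{λ : ρ ≤ λσ}. -/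
open Matrix
open scoped ComplexOrder Classical

/-- Real power of a Hermitian matrix via the spectral theorem (junk value `0`
for non-Hermitian input).  For negative exponents this uses the convention
`0^r = 0` on the kernel, i.e. powers are taken on the support. -/
noncomputable def mrpow {n : Type} [Fintype n] [DecidableEq n]
    (A : Matrix n n ℂ) (r : ℝ) : Matrix n n ℂ :=
  if hA : A.IsHermitian then
    (hA.eigenvectorUnitary : Matrix n n ℂ) *
      Matrix.diagonal (fun i => ((hA.eigenvalues i ^ r : ℝ) : ℂ)) *
        (hA.eigenvectorUnitary : Matrix n n ℂ)ᴴ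
  else 0

/-- The sandwiched Rényi relative entropy
`D̃_α(ρ‖σ) = (1/(α−1)) log₂ Tr[(σ^{(1−α)/(2α)} ρ σ^{(1−α)/(2α)})^α]`. -/
noncomputable def sandwichedRenyi {n : Type} [Fintype n] [DecidableEq n]
    (α : ℝ) (ρ σ : Matrix n n ℂ) : ℝ :=
  (α - 1)⁻¹ *
    Real.logb 2
      ((mrpow (mrpow σ ((1 - α) / (2 * α)) * ρ * mrpow σ ((1 - α) / (2 * α))) α).trace.re)

variable {n : Type} [Fintype n] [DecidableEq n]

open Polynomial
set_option linter.unusedSectionVars false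

lemma quad_diag (V : Matrix n n ℂ) (d : n → ℝ) (v : n → ℂ) :
    star v ⬝ᵥ (Vᴴ * diagonal (fun j => (d j : ℂ)) * V) *ᵥ v
      = ((∑ j, d j * Complex.normSq ((V *ᵥ v) j) : ℝ) : ℂ) := by
  rw [← mulVec_mulVec, ← mulVec_mulVec, dotProduct_mulVec, ← star_mulVec]
  push_cast
  simp only [dotProduct, mulVec_diagonal, Pi.star_apply]
  refine Finset.sum_congr rfl fun j _ => ?_
  rw [show star ((V *ᵥ v) j) = (starRingEnd ℂ) ((V *ᵥ v) j) from rfl]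
  rw [mul_comm ((starRingEnd ℂ) _), mul_assoc, Complex.mul_conj']
  simp [Complex.normSq_eq_norm_sq]

lemma conj_col (A B : Matrix n n ℂ) (k : n) :
    star (fun i => B i k) ⬝ᵥ (A *ᵥ fun i => B i k) = (Bᴴ * A * B) k k := by
  simp only [mul_apply, mulVec, dotProduct, conjTranspose_apply, Pi.star_apply,
    Finset.sum_mul, Finset.mul_sum]
  rw [Finset.sum_comm]
  exact Finset.sum_congr rfl fun i _ => Finset.sum_congr rfl fun j _ => by ring

lemma mulVec_col (A B : Matrix n n ℂ) (k : n) :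
    A *ᵥ (fun i => B i k) = fun i => (A * B) i k := by
  funext i; simp [mulVec, dotProduct, mul_apply]

namespace herm
variable {A : Matrix n n ℂ} (hA : A.IsHermitian)

lemma hU1 : (hA.eigenvectorUnitary : Matrix n n ℂ)ᴴ * (hA.eigenvectorUnitary : Matrix n n ℂ) = 1 := by
  rw [← star_eq_conjTranspose]
  exact (Matrix.mem_unitaryGroup_iff').mp (hA.eigenvectorUnitary).2

lemma hU2 : (hA.eigenvectorUnitary : Matrix n n ℂ) * (hA.eigenvectorUnitary : Matrix n n ℂ)ᴴ = 1 := by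
  rw [← star_eq_conjTranspose]
  exact (Matrix.mem_unitaryGroup_iff).mp (hA.eigenvectorUnitary).2

lemma spec : A = (hA.eigenvectorUnitary : Matrix n n ℂ) *
    diagonal (fun i => (hA.eigenvalues i : ℂ)) * (hA.eigenvectorUnitary : Matrix n n ℂ)ᴴ := by
  rw [← star_eq_conjTranspose]
  exact hA.spectral_theorem

lemma quad_eig (v : n → ℂ) :
    star v ⬝ᵥ A *ᵥ v = ((∑ j, hA.eigenvalues j *
      Complex.normSq (((hA.eigenvectorUnitary : Matrix n n ℂ)ᴴ *ᵥ v) j) : ℝ) : ℂ) := by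
  conv_lhs => rw [spec hA]
  rw [← quad_diag ((hA.eigenvectorUnitary : Matrix n n ℂ)ᴴ) (hA.eigenvalues) v]
  rw [conjTranspose_conjTranspose]

lemma parseval (v : n → ℂ) :
    star v ⬝ᵥ v = ((∑ j,
      Complex.normSq (((hA.eigenvectorUnitary : Matrix n n ℂ)ᴴ *ᵥ v) j) : ℝ) : ℂ) := by
  have h := quad_diag ((hA.eigenvectorUnitary : Matrix n n ℂ)ᴴ) (fun _ => (1:ℝ)) v
  simp only [Complex.ofReal_one, one_mul, conjTranspose_conjTranspose, diagonal_one, mul_one] at h ⊢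
  rw [← h, hU2 hA, one_mulVec]

lemma conj_diag : (hA.eigenvectorUnitary : Matrix n n ℂ)ᴴ * A * (hA.eigenvectorUnitary : Matrix n n ℂ)
    = diagonal (fun i => (hA.eigenvalues i : ℂ)) := by
  calc (hA.eigenvectorUnitary : Matrix n n ℂ)ᴴ * A * (hA.eigenvectorUnitary : Matrix n n ℂ)
      = ((hA.eigenvectorUnitary : Matrix n n ℂ)ᴴ * (hA.eigenvectorUnitary : Matrix n n ℂ)) *
        diagonal (fun i => (hA.eigenvalues i : ℂ)) *
        ((hA.eigenvectorUnitary : Matrix n n ℂ)ᴴ * (hA.eigenvectorUnitary : Matrix n n ℂ)) := by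
        rw [hU1 hA, one_mul, mul_one]
        have : (hA.eigenvectorUnitary : Matrix n n ℂ)ᴴ * A * (hA.eigenvectorUnitary : Matrix n n ℂ)
            = (hA.eigenvectorUnitary : Matrix n n ℂ)ᴴ * ((hA.eigenvectorUnitary : Matrix n n ℂ) *
              diagonal (fun i => (hA.eigenvalues i : ℂ)) *
              (hA.eigenvectorUnitary : Matrix n n ℂ)ᴴ) * (hA.eigenvectorUnitary : Matrix n n ℂ) := by
          rw [← spec hA]
        rw [this, ← mul_assoc, ← mul_assoc, mul_assoc _ _ ((hA.eigenvectorUnitary : Matrix n n ℂ)ᴴ),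
          hU1 hA]
        noncomm_ring [hU1 hA]
    _ = _ := by rw [hU1 hA]; simp

lemma mulVec_eigcol (k : n) :
    A *ᵥ (fun i => (hA.eigenvectorUnitary : Matrix n n ℂ) i k)
      = (hA.eigenvalues k : ℂ) • (fun i => (hA.eigenvectorUnitary : Matrix n n ℂ) i k) := by
  rw [mulVec_col]
  have : A * (hA.eigenvectorUnitary : Matrix n n ℂ)
      = (hA.eigenvectorUnitary : Matrix n n ℂ) * diagonal (fun i => (hA.eigenvalues i : ℂ)) := by
    calc A * (hA.eigenvectorUnitary : Matrix n n ℂ)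
        = (hA.eigenvectorUnitary : Matrix n n ℂ) * diagonal (fun i => (hA.eigenvalues i : ℂ)) *
          ((hA.eigenvectorUnitary : Matrix n n ℂ)ᴴ * (hA.eigenvectorUnitary : Matrix n n ℂ)) := by
          rw [← mul_assoc, ← spec hA]
      _ = _ := by rw [hU1 hA, mul_one]
  funext i
  simp [this, mul_diagonal, mul_comm]

lemma eigcol_norm (k : n) :
    star (fun i => (hA.eigenvectorUnitary : Matrix n n ℂ) i k)
      ⬝ᵥ (fun i => (hA.eigenvectorUnitary : Matrix n n ℂ) i k) = 1 := by
  have h := congrFun (congrFun (hU1 hA) k) k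
  simp only [mul_apply, conjTranspose_apply, one_apply_eq] at h
  simpa [dotProduct] using h

end herm

lemma flip_bound (B : Matrix n n ℂ) (c : ℝ) (hc : 0 ≤ c)
    (h : ∀ v : n → ℂ, (star v ⬝ᵥ (Bᴴ * B) *ᵥ v).re ≤ c * (star v ⬝ᵥ v).re) (v : n → ℂ) :
    (star v ⬝ᵥ (B * Bᴴ) *ᵥ v).re ≤ c * (star v ⬝ᵥ v).re := by
  have hP : (B * Bᴴ).PosSemidef := posSemidef_self_mul_conjTranspose B
  have key : ∀ k, hP.1.eigenvalues k ≤ c := by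
    intro k
    set u : n → ℂ := fun i => (hP.1.eigenvectorUnitary : Matrix n n ℂ) i k with hu
    set μ : ℝ := hP.1.eigenvalues k with hμ
    have hμ0 : 0 ≤ μ := hP.eigenvalues_nonneg k
    have hBu : (B * Bᴴ) *ᵥ u = (μ:ℂ) • u := herm.mulVec_eigcol hP.1 k
    have hun : star u ⬝ᵥ u = 1 := herm.eigcol_norm hP.1 k
    have hsw : star (Bᴴ *ᵥ u) = star u ᵥ* B := by
      rw [star_mulVec, conjTranspose_conjTranspose]
    have h1 : star (Bᴴ *ᵥ u) ⬝ᵥ (Bᴴ *ᵥ u) = (μ:ℂ) := by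
      rw [hsw, ← dotProduct_mulVec, mulVec_mulVec, hBu, dotProduct_smul, hun, smul_eq_mul, mul_one]
    have h2 : star (Bᴴ *ᵥ u) ⬝ᵥ ((Bᴴ * B) *ᵥ (Bᴴ *ᵥ u)) = ((μ:ℂ) * μ) := by
      have : (Bᴴ * B) *ᵥ (Bᴴ *ᵥ u) = (μ:ℂ) • (Bᴴ *ᵥ u) := by
        rw [mulVec_mulVec, mul_assoc, ← mulVec_mulVec, hBu, mulVec_smul]
      rw [this, dotProduct_smul, h1, smul_eq_mul]
    have h3 := h (Bᴴ *ᵥ u)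
    rw [h2, h1] at h3
    simp only [Complex.mul_re, Complex.ofReal_re, Complex.ofReal_im, mul_zero, sub_zero] at h3
    rcases hμ0.eq_or_lt with h0 | hpos
    · linarith
    · exact le_of_mul_le_mul_right (by linarith) hpos
  have hq := herm.quad_eig hP.1 v
  have hp := herm.parseval hP.1 v
  rw [hq, hp, Complex.ofReal_re, Complex.ofReal_re]
  rw [Finset.mul_sum]
  exact Finset.sum_le_sum fun k _ => by
    have := Complex.normSq_nonneg (((hP.1.eigenvectorUnitary : Matrix n n ℂ)ᴴ *ᵥ v) k)
    nlinarith [key k]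

/-- Conjugation by an invertible pair as an algebra hom. -/
noncomputable def conjAH (U V : Matrix n n ℂ) (hUV : U * V = 1) (hVU : V * U = 1) :
    Matrix n n ℂ →ₐ[ℂ] Matrix n n ℂ where
  toFun B := U * B * V
  map_one' := by show U * 1 * V = 1; rw [mul_one, hUV]
  map_mul' B C := by
    show U * (B * C) * V = (U * B * V) * (U * C * V)
    have : U * (B * C) * V = (U * B) * (V * U) * (C * V) := by rw [hVU]; noncomm_ring
    rw [this]; noncomm_ring
  map_zero' := by simp
  map_add' B C := by show U * (B + C) * V = U * B * V + U * C * V; noncomm_ring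
  commutes' c := by
    show U * algebraMap ℂ (Matrix n n ℂ) c * V = algebraMap ℂ (Matrix n n ℂ) c
    simp only [Algebra.algebraMap_eq_smul_one]
    rw [mul_smul_comm, smul_mul_assoc, mul_one, hUV]

lemma aeval_diag (d : n → ℂ) (p : ℂ[X]) :
    Polynomial.aeval (diagonal d) p = diagonal (fun i => Polynomial.eval (d i) p) := by
  have h := Polynomial.aeval_algHom_apply (Matrix.diagonalAlgHom (R := ℂ) (α := ℂ) (n := n)) d p
  simp only [diagonalAlgHom_apply] at h
  rw [h]
  have he : ((Polynomial.aeval d) p) = fun i => Polynomial.eval (d i) p := by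
    funext i
    have h2 := Polynomial.aeval_algHom_apply (Pi.evalAlgHom ℂ (fun _ : n => ℂ) i) d p
    simp only [Pi.evalAlgHom_apply] at h2
    rw [← h2]
    simp [Polynomial.aeval_def, Polynomial.eval₂_eq_eval_map, Algebra.algebraMap_self]
  rw [he]

lemma aeval_herm {A : Matrix n n ℂ} (hA : A.IsHermitian) (p : ℂ[X]) :
    Polynomial.aeval A p = (hA.eigenvectorUnitary : Matrix n n ℂ) *
      diagonal (fun i => Polynomial.eval ((hA.eigenvalues i : ℂ)) p) *
      (hA.eigenvectorUnitary : Matrix n n ℂ)ᴴ := by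
  have key := Polynomial.aeval_algHom_apply
    (conjAH (hA.eigenvectorUnitary : Matrix n n ℂ) (hA.eigenvectorUnitary : Matrix n n ℂ)ᴴ
      (herm.hU2 hA) (herm.hU1 hA)) (diagonal (fun i => (hA.eigenvalues i : ℂ))) p
  have hc : ∀ B, (conjAH (hA.eigenvectorUnitary : Matrix n n ℂ)
      (hA.eigenvectorUnitary : Matrix n n ℂ)ᴴ (herm.hU2 hA) (herm.hU1 hA)) B
      = (hA.eigenvectorUnitary : Matrix n n ℂ) * B * (hA.eigenvectorUnitary : Matrix n n ℂ)ᴴ :=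
    fun B => rfl
  simp only [hc] at key
  rw [← herm.spec hA, aeval_diag] at key
  rw [key]

lemma aeval_comm (Y : Matrix n n ℂ) (q : ℂ[X]) :
    (Polynomial.aeval (Y * Yᴴ) q) * Y = Y * Polynomial.aeval (Yᴴ * Y) q := by
  have hpow : ∀ k : ℕ, (Y * Yᴴ) ^ k * Y = Y * (Yᴴ * Y) ^ k := by
    intro k; induction k with
    | zero => simp
    | succ m ih =>
        rw [pow_succ, pow_succ, mul_assoc ((Y * Yᴴ) ^ m), show (Y * Yᴴ) * Y = Y * (Yᴴ * Y) by
          noncomm_ring, ← mul_assoc, ih, mul_assoc]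
  induction q using Polynomial.induction_on' with
  | add p r hp hr => rw [map_add, map_add, add_mul, mul_add, hp, hr]
  | monomial k a =>
      rw [Polynomial.aeval_monomial, Polynomial.aeval_monomial, mul_assoc, hpow k,
        ← mul_assoc, Algebra.commutes, mul_assoc]

lemma trace_flip (Y : Matrix n n ℂ) {α : ℝ} (hα0 : α ≠ 0) :
    (mrpow (Y * Yᴴ) α).trace = (mrpow (Yᴴ * Y) α).trace := by
  have h1 : (Y * Yᴴ).PosSemidef := posSemidef_self_mul_conjTranspose Y
  have h2 : (Yᴴ * Y).PosSemidef := posSemidef_conjTranspose_mul_self Y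
  set s : Finset ℝ := insert 0 ((Finset.image h1.1.eigenvalues Finset.univ) ∪
    (Finset.image h2.1.eigenvalues Finset.univ)) with hs
  set p : ℝ[X] := Lagrange.interpolate s id (fun x => x ^ α) with hpdef
  have hnode : ∀ x ∈ s, Polynomial.eval x p = x ^ α := fun x hx =>
    Lagrange.eval_interpolate_at_node _ (Set.injOn_id _) hx
  set P : ℂ[X] := p.map (algebraMap ℝ ℂ) with hPdef
  have hPnode : ∀ x ∈ s, Polynomial.eval ((x : ℝ) : ℂ) P = ((x ^ α : ℝ) : ℂ) := by
    intro x hx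
    rw [hPdef, show ((x:ℝ):ℂ) = algebraMap ℝ ℂ x from rfl, Polynomial.eval_map,
      Polynomial.eval₂_at_apply, hnode x hx]
    rfl
  have hP0 : P.coeff 0 = 0 := by
    rw [Polynomial.coeff_zero_eq_eval_zero]
    have := hPnode 0 (Finset.mem_insert_self _ _)
    simpa [Real.zero_rpow hα0] using this
  obtain ⟨q, hq⟩ : (Polynomial.X : ℂ[X]) ∣ P := Polynomial.X_dvd_iff.mpr hP0
  have e1 : mrpow (Y * Yᴴ) α = Polynomial.aeval (Y * Yᴴ) P := by
    rw [mrpow, dif_pos h1.1, aeval_herm h1.1]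
    have hfn : (fun i => ((h1.1.eigenvalues i ^ α : ℝ) : ℂ))
        = fun i => Polynomial.eval ((h1.1.eigenvalues i : ℝ) : ℂ) P := by
      funext i
      exact (hPnode (h1.1.eigenvalues i) (Finset.mem_insert_of_mem (Finset.mem_union_left _
      (Finset.mem_image_of_mem _ (Finset.mem_univ i))))).symm
    rw [hfn]
  have e2 : mrpow (Yᴴ * Y) α = Polynomial.aeval (Yᴴ * Y) P := by
    rw [mrpow, dif_pos h2.1, aeval_herm h2.1]
    have hfn : (fun i => ((h2.1.eigenvalues i ^ α : ℝ) : ℂ))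
        = fun i => Polynomial.eval ((h2.1.eigenvalues i : ℝ) : ℂ) P := by
      funext i
      exact (hPnode (h2.1.eigenvalues i) (Finset.mem_insert_of_mem (Finset.mem_union_right _
      (Finset.mem_image_of_mem _ (Finset.mem_univ i))))).symm
    rw [hfn]
  rw [e1, e2, hq, _root_.map_mul, _root_.map_mul, Polynomial.aeval_X, Polynomial.aeval_X]
  rw [mul_assoc, trace_mul_comm, mul_assoc, aeval_comm, ← mul_assoc]

lemma jensen_rpow {α : ℝ} (hα : 1 < α) (p y : n → ℝ) (hp : ∀ j, 0 ≤ p j) (hy : ∀ j, 0 ≤ y j)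
    (hs : ∑ j, p j ≤ 1) : (∑ j, p j * y j) ^ α ≤ ∑ j, p j * y j ^ α := by
  have hα0 : α ≠ 0 := by positivity
  set c := ∑ j, p j with hc
  have hc0 : 0 ≤ c := Finset.sum_nonneg fun j _ => hp j
  rcases hc0.eq_or_lt with h0 | hcpos
  · have hz : ∀ j ∈ Finset.univ, p j = 0 :=
      (Finset.sum_eq_zero_iff_of_nonneg (fun j _ => hp j)).mp h0.symm
    have : ∀ j : n, p j = 0 := fun j => hz j (Finset.mem_univ j)
    simp [this, Real.zero_rpow hα0]
  · have key := Real.rpow_arith_mean_le_arith_mean_rpow Finset.univ (fun j => p j / c) y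
      (fun j _ => div_nonneg (hp j) hc0)
      (by rw [← Finset.sum_div, ← hc, div_self hcpos.ne'])
      (fun j _ => hy j) hα.le
    have hsum1 : ∑ j, (p j / c) * y j = (∑ j, p j * y j) / c := by
      rw [Finset.sum_div]; exact Finset.sum_congr rfl fun j _ => by ring
    have hsum2 : ∑ j, (p j / c) * y j ^ α = (∑ j, p j * y j ^ α) / c := by
      rw [Finset.sum_div]; exact Finset.sum_congr rfl fun j _ => by ring
    rw [hsum1, hsum2, Real.div_rpow (Finset.sum_nonneg fun j _ => mul_nonneg (hp j) (hy j)) hc0,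
      div_le_div_iff₀ (Real.rpow_pos_of_pos hcpos α) hcpos] at key
    -- key : (∑ p y)^α * c ≤ (∑ p y^α) * c^α
    have hcα : c ^ α ≤ c := by
      calc c ^ α ≤ c ^ (1:ℝ) := Real.rpow_le_rpow_of_exponent_ge hcpos hs hα.le
        _ = c := Real.rpow_one c
    have h1 : (∑ j, p j * y j ^ α) * c ^ α ≤ (∑ j, p j * y j ^ α) * c :=
      mul_le_mul_of_nonneg_left hcα (Finset.sum_nonneg fun j _ =>
        mul_nonneg (hp j) (Real.rpow_nonneg (hy j) α))
    have := key.trans h1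
    exact le_of_mul_le_mul_right this hcpos

lemma trace_mrpow {A : Matrix n n ℂ} (hA : A.IsHermitian) (r : ℝ) :
    (mrpow A r).trace = ((∑ i, hA.eigenvalues i ^ r : ℝ) : ℂ) := by
  rw [mrpow, dif_pos hA, trace_mul_cycle, herm.hU1 hA, one_mul, trace_diagonal]
  push_cast
  rfl

lemma psd_quad_re {A : Matrix n n ℂ} (hA : A.PosSemidef) (x : n → ℂ) :
    star x ⬝ᵥ A *ᵥ x = (((star x ⬝ᵥ A *ᵥ x).re : ℝ) : ℂ) ∧ 0 ≤ (star x ⬝ᵥ A *ᵥ x).re := by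
  have h := hA.dotProduct_mulVec_nonneg x
  rw [Complex.le_def] at h
  refine ⟨Complex.ext rfl ?_, h.1⟩
  simp [← h.2]

lemma quad_single (A : Matrix n n ℂ) (i : n) :
    star (Pi.single i 1) ⬝ᵥ A *ᵥ (Pi.single i 1) = A i i := by
  simp [mulVec_single, dotProduct, Pi.single_apply, apply_ite]

noncomputable def Fc (U : Matrix n n ℂ) (sg : n → ℝ) (g : ℝ → ℝ) : Matrix n n ℂ :=
  U * diagonal (fun i => ((g (sg i) : ℝ) : ℂ)) * Uᴴ

lemma Fc_mul {U : Matrix n n ℂ} (hU1 : Uᴴ * U = 1) (sg : n → ℝ) (g h : ℝ → ℝ) :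
    Fc U sg g * Fc U sg h = Fc U sg (fun x => g x * h x) := by
  rw [Fc, Fc, Fc]
  have : (U * diagonal (fun i => ((g (sg i) : ℝ) : ℂ)) * Uᴴ) *
      (U * diagonal (fun i => ((h (sg i) : ℝ) : ℂ)) * Uᴴ)
      = U * (diagonal (fun i => ((g (sg i) : ℝ) : ℂ)) * ((Uᴴ * U) *
        diagonal (fun i => ((h (sg i) : ℝ) : ℂ)))) * Uᴴ := by noncomm_ring
  rw [this, hU1, one_mul, diagonal_mul_diagonal]
  push_cast
  rfl

lemma Fc_herm (U : Matrix n n ℂ) (sg : n → ℝ) (g : ℝ → ℝ) : (Fc U sg g).IsHermitian := by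
  rw [Fc, IsHermitian, conjTranspose_mul, conjTranspose_mul, conjTranspose_conjTranspose,
    diagonal_conjTranspose]
  have : star (fun i => ((g (sg i) : ℝ) : ℂ)) = fun i => ((g (sg i) : ℝ) : ℂ) := by
    funext i
    simp [Pi.star_apply, Complex.conj_ofReal]
  rw [this, mul_assoc]

lemma quad_Fc (U : Matrix n n ℂ) (sg : n → ℝ) (g : ℝ → ℝ) (v : n → ℂ) :
    star v ⬝ᵥ (Fc U sg g) *ᵥ v
      = ((∑ j, g (sg j) * Complex.normSq ((Uᴴ *ᵥ v) j) : ℝ) : ℂ) := by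
  have : Fc U sg g = (Uᴴ)ᴴ * diagonal (fun i => ((g (sg i) : ℝ) : ℂ)) * Uᴴ := by
    rw [Fc, conjTranspose_conjTranspose]
  rw [this, quad_diag]

lemma mrpow_eq_Fc {σ : Matrix n n ℂ} (hσ : σ.IsHermitian) (r : ℝ) :
    mrpow σ r = Fc (hσ.eigenvectorUnitary : Matrix n n ℂ) hσ.eigenvalues (fun x => x ^ r) := by
  rw [mrpow, dif_pos hσ, Fc]

lemma self_eq_Fc {σ : Matrix n n ℂ} (hσ : σ.IsHermitian) :
    σ = Fc (hσ.eigenvectorUnitary : Matrix n n ℂ) hσ.eigenvalues (fun x => x) := by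
  rw [Fc]
  exact herm.spec hσ


/-- For `α ∈ (1,∞)`, a density operator `ρ` and positive semi-definite `σ` with
`supp(ρ) ⊆ supp(σ)`, the sandwiched Rényi relative entropy is bounded by the
max-relative entropy: `D̃_α(ρ‖σ) ≤ D_max(ρ‖σ)`. -/
theorem sandwichedRenyi_le_Dmax (α : ℝ) (hα : 1 < α)
    (ρ σ : Matrix n n ℂ) (hρ : ρ.PosSemidef) (hρtr : ρ.trace = 1)
    (hσ : σ.PosSemidef)
    (hsupp : ∀ v : n → ℂ, σ.mulVec v = 0 → ρ.mulVec v = 0) :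
    ((sandwichedRenyi α ρ σ : ℝ) : EReal) ≤ Dmax ρ σ := by
  rw [Dmax]
  by_cases hne : {l : ℝ | 0 ≤ l ∧ ((l : ℝ) • σ - ρ).PosSemidef}.Nonempty
  swap
  · rw [dif_neg hne]; exact le_top
  rw [dif_pos hne]
  set lam := sInf {l : ℝ | 0 ≤ l ∧ ((l : ℝ) • σ - ρ).PosSemidef} with hlam
  have hlam0 : 0 ≤ lam := le_csInf hne (fun l hl => hl.1)
  -- quadratic forms of ρ and σ are real and nonneg
  have hlamS : ((lam : ℝ) • σ - ρ).PosSemidef := by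
    refine Matrix.PosSemidef.of_dotProduct_mulVec_nonneg ?_ ?_
    · rw [IsHermitian, conjTranspose_sub, conjTranspose_smul, star_trivial, hσ.1, hρ.1]
    · intro x
      have haσ := psd_quad_re hσ x
      have hbρ := psd_quad_re hρ x
      have hexp : ∀ l : ℝ, star x ⬝ᵥ ((l : ℝ) • σ - ρ) *ᵥ x
          = ((l * (star x ⬝ᵥ σ *ᵥ x).re - (star x ⬝ᵥ ρ *ᵥ x).re : ℝ) : ℂ) := by
        intro l
        rw [sub_mulVec, dotProduct_sub, smul_mulVec, dotProduct_smul]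
        conv_lhs => rw [haσ.1, hbρ.1]
        push_cast [Complex.real_smul]
        ring
      have key : (star x ⬝ᵥ ρ *ᵥ x).re ≤ lam * (star x ⬝ᵥ σ *ᵥ x).re := by
        have hall : ∀ l ∈ {l : ℝ | 0 ≤ l ∧ ((l : ℝ) • σ - ρ).PosSemidef},
            (star x ⬝ᵥ ρ *ᵥ x).re ≤ l * (star x ⬝ᵥ σ *ᵥ x).re := by
          intro l hl
          have h2 := hl.2.dotProduct_mulVec_nonneg x
          rw [hexp l] at h2
          have h3 := (Complex.le_def.mp h2).1
          simp only [Complex.ofReal_re, Complex.zero_re] at h3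
          linarith
        rcases haσ.2.eq_or_lt with h0 | hpos
        · obtain ⟨l₀, hl₀⟩ := hne
          have h1 := hall l₀ hl₀
          rw [← h0] at h1 ⊢
          simpa using h1
        · rw [← div_le_iff₀ hpos]
          refine le_csInf hne fun l hl => ?_
          rw [div_le_iff₀ hpos]
          exact hall l hl
      rw [hexp lam, Complex.le_def]
      constructor
      · simp only [Complex.ofReal_re, Complex.zero_re]
        linarith
      · simp
  have hlampos : 0 < lam := by
    rcases hlam0.eq_or_lt with h0 | h
    · exfalso
      have hneg : (-ρ).PosSemidef := by
        have := hlamS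
        rw [← h0] at this
        simpa using this
      have hzero : ∀ i, ρ i i = 0 := by
        intro i
        have h1 := (psd_quad_re hρ (Pi.single i 1))
        have h2 := (psd_quad_re hneg (Pi.single i 1))
        rw [quad_single] at h1
        rw [quad_single] at h2
        simp only [Matrix.neg_apply] at h2
        have : (ρ i i).re = 0 := by
          have := h2.2
          simp only [Complex.neg_re] at this
          linarith [h1.2]
        rw [h1.1, this]
        simp
      have : ρ.trace = 0 := by
        rw [trace]
        simp [diag, hzero]
      rw [this] at hρtr
      exact one_ne_zero hρtr.symm
    · exact h
  -- main development
  have hα0 : α ≠ 0 := by linarith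
  set t : ℝ := (1 - α) / (2 * α) with ht
  have htne : t ≠ 0 := div_ne_zero (by linarith) (by linarith)
  set Uσ : Matrix n n ℂ := (hσ.1.eigenvectorUnitary : Matrix n n ℂ) with hUσ
  set sg : n → ℝ := hσ.1.eigenvalues with hsg
  have hsg0 : ∀ j, 0 ≤ sg j := fun j => hσ.eigenvalues_nonneg j
  have hU1 : Uσᴴ * Uσ = 1 := herm.hU1 hσ.1
  have hU2 : Uσ * Uσᴴ = 1 := herm.hU2 hσ.1
  have hσF : σ = Fc Uσ sg (fun x => x) := self_eq_Fc hσ.1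
  have hmrt : mrpow σ t = Fc Uσ sg (fun x => x ^ t) := mrpow_eq_Fc hσ.1 t
  set R : Matrix n n ℂ := mrpow ρ (1/2) with hRdef
  have hRH : R.IsHermitian := by
    rw [hRdef, mrpow_eq_Fc hρ.1]; exact Fc_herm _ _ _
  have hRR : R * R = ρ := by
    rw [hRdef, mrpow_eq_Fc hρ.1, Fc_mul (herm.hU1 hρ.1)]
    conv_rhs => rw [self_eq_Fc hρ.1]
    simp only [Fc]
    congr 3
    funext i
    rw [← Real.rpow_add' (hρ.eigenvalues_nonneg i) (by norm_num)]
    norm_num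
  set X : Matrix n n ℂ := Fc Uσ sg (fun x => x ^ t) * R with hX
  have hXH : Xᴴ = R * Fc Uσ sg (fun x => x ^ t) := by
    rw [hX, conjTranspose_mul, hRH, (Fc_herm Uσ sg _)]
  set g0 : ℝ → ℝ := fun x => x ^ t * x ^ t with hg0
  set K : Matrix n n ℂ := R * Fc Uσ sg g0 * R with hKdef
  have hMX : mrpow σ t * ρ * mrpow σ t = X * Xᴴ := by
    rw [hX, hXH, hmrt, ← hRR]; noncomm_ring
  have hKX : Xᴴ * X = K := by
    rw [hX, hXH, hKdef, hg0, ← Fc_mul hU1]; noncomm_ring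
  have hKpsd : K.PosSemidef := hKX ▸ posSemidef_conjTranspose_mul_self X
  have hflip : (mrpow (mrpow σ t * ρ * mrpow σ t) α).trace = (mrpow K α).trace := by
    rw [hMX, ← hKX, trace_flip X hα0]
  set κ : n → ℝ := hKpsd.1.eigenvalues with hκ
  have hκ0 : ∀ k, 0 ≤ κ k := fun k => hKpsd.eigenvalues_nonneg k
  set UK : Matrix n n ℂ := (hKpsd.1.eigenvectorUnitary : Matrix n n ℂ) with hUK
  set W : Matrix n n ℂ := Uσᴴ * R * UK with hW
  set q : n → n → ℝ := fun k j => Complex.normSq (W j k) with hqdef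
  have hq0 : ∀ k j, 0 ≤ q k j := fun k j => Complex.normSq_nonneg _
  have hquad : ∀ (g : ℝ → ℝ) (k : n),
      star (fun i => UK i k) ⬝ᵥ (R * Fc Uσ sg g * R) *ᵥ (fun i => UK i k)
        = ((∑ j, g (sg j) * q k j : ℝ) : ℂ) := by
    intro g k
    have hform : R * Fc Uσ sg g * R
        = (Uσᴴ * R)ᴴ * diagonal (fun i => ((g (sg i) : ℝ) : ℂ)) * (Uσᴴ * R) := by
      rw [conjTranspose_mul, conjTranspose_conjTranspose, hRH, Fc]
      noncomm_ring
    rw [hform, quad_diag]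
    norm_cast
  have hκeq : ∀ k, κ k = ∑ j, g0 (sg j) * q k j := by
    intro k
    have hcd := herm.conj_diag hKpsd.1
    rw [← hUK, ← hκ] at hcd
    have h1 := conj_col K UK k
    rw [hcd, diagonal_apply_eq] at h1
    apply Complex.ofReal_inj.mp
    rw [← hquad g0 k, ← hKdef, h1]
  set g1 : ℝ → ℝ := fun x => if 0 < x then x⁻¹ else 0 with hg1
  set g2 : ℝ → ℝ := fun x => if 0 < x then (Real.sqrt x)⁻¹ else 0 with hg2
  set gP : ℝ → ℝ := fun x => if 0 < x then 1 else 0 with hgP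
  have hg2sq : (fun x => g2 x * g2 x) = g1 := by
    funext x
    by_cases hx : 0 < x
    · simp only [hg2, hg1, if_pos hx]
      rw [← mul_inv, Real.mul_self_sqrt hx.le]
    · simp [hg2, hg1, if_neg hx]
  have hg2σ : (fun x => g2 x * x * g2 x) = gP := by
    funext x
    by_cases hx : 0 < x
    · simp only [hg2, hgP, if_pos hx]
      have hs : Real.sqrt x ≠ 0 := (Real.sqrt_pos.mpr hx).ne'
      rw [mul_comm, ← mul_assoc, ← mul_inv, Real.mul_self_sqrt hx.le, inv_mul_cancel₀ hx.ne']
    · simp [hg2, hgP, if_neg hx]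
  have hcontr : ∀ k, ∑ j, g1 (sg j) * q k j ≤ lam := by
    intro k
    have hBBH : ∀ v : n → ℂ,
        (star v ⬝ᵥ ((R * Fc Uσ sg g2) * (R * Fc Uσ sg g2)ᴴ) *ᵥ v).re
          ≤ lam * (star v ⬝ᵥ v).re := by
      apply flip_bound _ _ hlam0
      intro v
      have hBB : (R * Fc Uσ sg g2)ᴴ * (R * Fc Uσ sg g2) = Fc Uσ sg g2 * ρ * Fc Uσ sg g2 := by
        rw [conjTranspose_mul, hRH, (Fc_herm Uσ sg g2), ← hRR]; noncomm_ring
      rw [hBB]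
      have hconj := hlamS.mul_mul_conjTranspose_same (Fc Uσ sg g2)
      rw [(Fc_herm Uσ sg g2)] at hconj
      have hexpand : Fc Uσ sg g2 * ((lam : ℝ) • σ - ρ) * Fc Uσ sg g2
          = (lam : ℝ) • Fc Uσ sg gP - Fc Uσ sg g2 * ρ * Fc Uσ sg g2 := by
        have hσ2 : Fc Uσ sg g2 * σ * Fc Uσ sg g2 = Fc Uσ sg gP := by
          conv_lhs => rw [hσF]
          simp only [Fc_mul hU1]
          rw [show (fun x => g2 x * x * g2 x) = gP from hg2σ]
        rw [mul_sub, sub_mul, mul_smul_comm, smul_mul_assoc, hσ2]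
      rw [hexpand] at hconj
      have h1 := hconj.dotProduct_mulVec_nonneg v
      rw [sub_mulVec, dotProduct_sub, smul_mulVec, dotProduct_smul, Complex.le_def] at h1
      have h1re := h1.1
      simp only [Complex.zero_re, Complex.sub_re, Complex.real_smul, Complex.mul_re,
        Complex.ofReal_re, Complex.ofReal_im, zero_mul, sub_zero] at h1re
      have hPle : (star v ⬝ᵥ (Fc Uσ sg gP) *ᵥ v).re ≤ (star v ⬝ᵥ v).re := by
        have hq1 := quad_Fc Uσ sg gP v
        have hpv := herm.parseval hσ.1 v
        rw [← hUσ] at hpv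
        rw [hq1, hpv, Complex.ofReal_re, Complex.ofReal_re]
        apply Finset.sum_le_sum
        intro j _
        by_cases hx : 0 < sg j
        · simp [hgP, if_pos hx]
        · simp only [hgP, if_neg hx, zero_mul]
          exact Complex.normSq_nonneg _
      have h4 := mul_le_mul_of_nonneg_left hPle hlam0
      linarith
    have hval := hBBH (fun i => UK i k)
    have hBform : (R * Fc Uσ sg g2) * (R * Fc Uσ sg g2)ᴴ = R * Fc Uσ sg g1 * R := by
      rw [conjTranspose_mul, hRH, (Fc_herm Uσ sg g2),
        show R * Fc Uσ sg g2 * (Fc Uσ sg g2 * R)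
          = R * (Fc Uσ sg g2 * Fc Uσ sg g2) * R from by noncomm_ring,
        Fc_mul hU1, show (fun x => g2 x * g2 x) = g1 from hg2sq]
    rw [hBform, hquad g1 k] at hval
    have hcn := herm.eigcol_norm hKpsd.1 k
    rw [← hUK] at hcn
    rw [hcn] at hval
    simpa using hval
  set r : n → ℝ := fun j => ((Uσᴴ * ρ * Uσ) j j).re with hrdef
  have hr0 : ∀ j, 0 ≤ r j := by
    intro j
    have h1 := conj_col ρ Uσ j
    have h2 := (psd_quad_re hρ (fun i => Uσ i j)).2
    rw [h1] at h2
    simpa only [hrdef] using h2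
  have hsumq : ∀ j, ∑ k, q k j = r j := by
    intro j
    have hUK2 := herm.hU2 hKpsd.1
    rw [← hUK] at hUK2
    have hWH : Wᴴ = UKᴴ * (R * Uσ) := by
      rw [hW, conjTranspose_mul, conjTranspose_mul, conjTranspose_conjTranspose, hRH]
    have h2 : W * Wᴴ = Uσᴴ * ρ * Uσ := by
      rw [hW, hWH, ← hRR]
      have hstep : Uσᴴ * R * UK * (UKᴴ * (R * Uσ)) = Uσᴴ * R * (UK * UKᴴ) * (R * Uσ) := by
        noncomm_ring
      rw [hstep, hUK2, mul_one]
      noncomm_ring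
    have h1 : (W * Wᴴ) j j = ((∑ k, q k j : ℝ) : ℂ) := by
      rw [mul_apply, Complex.ofReal_sum]
      refine Finset.sum_congr rfl fun k _ => ?_
      rw [conjTranspose_apply, show star (W j k) = (starRingEnd ℂ) (W j k) from rfl,
        Complex.mul_conj]
    rw [h2] at h1
    have h3 := congrArg Complex.re h1
    simp only [Complex.ofReal_re] at h3
    simp only [hrdef]
    exact h3.symm
  have hsumr : ∑ j, r j = 1 := by
    have h2 : (Uσᴴ * ρ * Uσ).trace = 1 := by
      rw [trace_mul_cycle, hU2, one_mul, hρtr]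
    have h3 := congrArg Complex.re h2
    rw [trace] at h3
    rw [Complex.re_sum] at h3
    simpa only [hrdef, diag_apply, Complex.one_re] using h3
  have hrz : ∀ j, sg j = 0 → r j = 0 := by
    intro j hj
    have hcol := herm.mulVec_eigcol hσ.1 j
    rw [← hUσ, ← hsg] at hcol
    rw [hj] at hcol
    simp only [Complex.ofReal_zero, zero_smul] at hcol
    have hρcol := hsupp _ hcol
    have h1 := conj_col ρ Uσ j
    rw [hρcol, dotProduct_zero] at h1
    simp only [hrdef]
    rw [← h1]
    simp
  have hκswap : ∑ k, κ k = ∑ j, g0 (sg j) * r j := by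
    rw [Finset.sum_congr rfl fun k _ => hκeq k, Finset.sum_comm]
    exact Finset.sum_congr rfl fun j _ => by rw [← Finset.mul_sum, hsumq j]
  have hg00 : ∀ x, 0 ≤ g0 x := fun x => by simp only [hg0]; exact mul_self_nonneg _
  have hTpos : 0 < ∑ k, κ k ^ α := by
    have h1 : 0 < ∑ k, κ k := by
      rcases (Finset.sum_nonneg fun (k : n) _ => hκ0 k).eq_or_lt with h0 | h
      · exfalso
        rw [hκswap] at h0
        have hterm := (Finset.sum_eq_zero_iff_of_nonneg
          fun j _ => mul_nonneg (hg00 (sg j)) (hr0 j)).mp h0.symm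
        have hallr : ∀ j, r j = 0 := by
          intro j
          rcases (hsg0 j).eq_or_lt with hz | hpos
          · exact hrz j hz.symm
          · have hg0pos : 0 < g0 (sg j) := by
              simp only [hg0]
              exact mul_pos (Real.rpow_pos_of_pos hpos t) (Real.rpow_pos_of_pos hpos t)
            rcases mul_eq_zero.mp (hterm j (Finset.mem_univ j)) with h | h
            · linarith
            · exact h
        rw [Finset.sum_congr rfl fun j _ => hallr j] at hsumr
        simp at hsumr
      · exact h
    obtain ⟨k0, hk0⟩ : ∃ k, 0 < κ k := by
      by_contra hcon
      push_neg at hcon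
      have : ∑ k, κ k ≤ 0 := Finset.sum_nonpos fun k _ => hcon k
      linarith
    exact Finset.sum_pos' (fun k _ => Real.rpow_nonneg (hκ0 k) α)
      ⟨k0, Finset.mem_univ k0, Real.rpow_pos_of_pos hk0 α⟩
  have hmain : ∑ k, κ k ^ α ≤ lam ^ (α - 1) := by
    set y : n → ℝ := fun j => lam * sg j ^ (1/α) with hy
    set p : n → n → ℝ := fun k j => if 0 < sg j then q k j / (lam * sg j) else 0 with hp
    have hyn : ∀ j, 0 ≤ y j := fun j => mul_nonneg hlam0 (Real.rpow_nonneg (hsg0 j) _)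
    have hpn : ∀ k j, 0 ≤ p k j := by
      intro k j
      simp only [hp]
      split
      · exact div_nonneg (hq0 k j) (mul_nonneg hlam0 (hsg0 j))
      · exact le_refl 0
    have h2t : t + t = 1/α - 1 := by
      rw [ht]; field_simp; ring
    have hpy : ∀ k, κ k = ∑ j, p k j * y j := by
      intro k
      rw [hκeq k]
      refine Finset.sum_congr rfl fun j _ => ?_
      rcases (hsg0 j).eq_or_lt with hz | hpos
      · simp only [hp, hg0, ← hz, lt_irrefl, if_neg, Real.zero_rpow htne]
        simp [Real.zero_rpow htne]
      · simp only [hp, hg0, hy, if_pos hpos]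
        have h1 : sg j ^ t * sg j ^ t = sg j ^ (1/α) / sg j := by
          rw [← Real.rpow_add hpos, h2t, Real.rpow_sub hpos, Real.rpow_one]
        rw [h1]
        field_simp
    have hpsum : ∀ k, ∑ j, p k j ≤ 1 := by
      intro k
      have h1 : ∑ j, p k j = lam⁻¹ * ∑ j, g1 (sg j) * q k j := by
        rw [Finset.mul_sum]
        refine Finset.sum_congr rfl fun j _ => ?_
        simp only [hp, hg1]
        split
        · rw [div_eq_mul_inv, mul_inv]
          ring
        · simp
      rw [h1]
      calc lam⁻¹ * ∑ j, g1 (sg j) * q k j ≤ lam⁻¹ * lam :=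
            mul_le_mul_of_nonneg_left (hcontr k) (inv_nonneg.mpr hlam0)
        _ = 1 := inv_mul_cancel₀ hlampos.ne'
    have hjen : ∀ k, κ k ^ α ≤ ∑ j, p k j * y j ^ α := by
      intro k
      rw [hpy k]
      exact jensen_rpow hα (p k) y (hpn k) hyn (hpsum k)
    calc ∑ k, κ k ^ α ≤ ∑ k, ∑ j, p k j * y j ^ α := Finset.sum_le_sum fun k _ => hjen k
      _ = ∑ j, (∑ k, p k j) * y j ^ α := by
          rw [Finset.sum_comm]
          exact Finset.sum_congr rfl fun j _ => by rw [Finset.sum_mul]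
      _ ≤ lam ^ (α - 1) := by
          have hterm : ∀ j, (∑ k, p k j) * y j ^ α ≤ lam ^ (α - 1) * r j := by
            intro j
            rcases (hsg0 j).eq_or_lt with hz | hpos
            · have hz' : ∀ k, p k j = 0 := fun k => by simp only [hp, ← hz, lt_irrefl, if_neg]; simp
              rw [Finset.sum_congr rfl fun k _ => hz' k]
              simp only [Finset.sum_const_zero, zero_mul]
              exact mul_nonneg (Real.rpow_nonneg hlam0 _) (hr0 j)
            · have hyα : y j ^ α = lam ^ α * sg j := by
                simp only [hy]
                rw [Real.mul_rpow hlam0 (Real.rpow_nonneg (hsg0 j) _),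
                  ← Real.rpow_mul (hsg0 j), one_div, inv_mul_cancel₀ hα0, Real.rpow_one]
              have hsump : ∑ k, p k j = r j / (lam * sg j) := by
                rw [Finset.sum_congr rfl fun k _ => by
                    simp only [hp]; rw [if_pos hpos],
                  ← Finset.sum_div, hsumq j]
              rw [hsump, hyα]
              have hlamα : lam ^ α = lam ^ (α - 1) * lam := by
                rw [Real.rpow_sub hlampos, Real.rpow_one]
                field_simp
              have heq : r j / (lam * sg j) * (lam ^ α * sg j) = lam ^ (α - 1) * r j := by
                rw [hlamα]
                field_simp
              exact le_of_eq heq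
          calc ∑ j, (∑ k, p k j) * y j ^ α ≤ ∑ j, lam ^ (α - 1) * r j :=
                Finset.sum_le_sum fun j _ => hterm j
            _ = lam ^ (α - 1) := by rw [← Finset.mul_sum, hsumr, mul_one]
  have hTre : (mrpow (mrpow σ t * ρ * mrpow σ t) α).trace.re = ∑ k, κ k ^ α := by
    rw [hflip]
    have h2 := trace_mrpow hKpsd.1 α
    rw [← hκ] at h2
    rw [h2, Complex.ofReal_re]
  rw [sandwichedRenyi, ← ht, hTre]
  have hfinal : (α - 1)⁻¹ * Real.logb 2 (∑ k, κ k ^ α) ≤ Real.logb 2 lam := by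
    have h1 : Real.log (∑ k, κ k ^ α) ≤ (α - 1) * Real.log lam := by
      have h0 := Real.log_le_log hTpos hmain
      rwa [Real.log_rpow hlampos] at h0
    have hlog2 : (0:ℝ) < Real.log 2 := Real.log_pos (by norm_num)
    rw [Real.logb, Real.logb]
    have h2 : (α - 1)⁻¹ * (Real.log (∑ k, κ k ^ α) / Real.log 2)
        = ((α - 1)⁻¹ * Real.log (∑ k, κ k ^ α)) / Real.log 2 := by ring
    rw [h2, div_le_div_iff_of_pos_right hlog2]
    calc (α - 1)⁻¹ * Real.log (∑ k, κ k ^ α)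
        ≤ (α - 1)⁻¹ * ((α - 1) * Real.log lam) :=
          mul_le_mul_of_nonneg_left h1 (inv_nonneg.mpr (by linarith))
      _ = Real.log lam := by
          rw [← mul_assoc, inv_mul_cancel₀ (by linarith : α - 1 ≠ 0), one_mul]
  exact_mod_cast hfinal
end

section
/- Privacy test soundness against separable attack: let γ = U^t (Φ_{K_AK_B} ⊗ θ_{S_AS_B}) U^{t†} be a bipartite private state with twisting unitary U^t = Σ_{i,j} |i⟩⟨i|_{K_A} ⊗ |j⟩⟨j|_{K_B} ⊗ U^{ij}_{S_AS_B}, where Φ_{K_AK_B} is maximally entangled of Schmidt rank K, and let Π^γ = U^t (Φ_{K_AK_B} ⊗ I_{S_AS_B}) U^{t†}. Then for every separable state σ ∈ SEP(S_AK_A : K_BS_B), Tr(Π^γ σ) ≤ 1/K. -/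
open Matrix
open scoped Kronecker ComplexOrder

variable {sa sb κ : Type} [Fintype sa] [DecidableEq sa] [Fintype sb] [DecidableEq sb]
  [Fintype κ] [DecidableEq κ] [Nonempty κ]

/-- Separable states across the cut `(S_A K_A) : (K_B S_B)`: finite convex
combinations of tensor products of density operators. -/
def IsSeparableState (σ : Matrix ((sa × κ) × (κ × sb)) ((sa × κ) × (κ × sb)) ℂ) : Prop :=
  ∃ (k : ℕ) (p : Fin k → ℝ) (ω : Fin k → Matrix (sa × κ) (sa × κ) ℂ)
      (τ : Fin k → Matrix (κ × sb) (κ × sb) ℂ),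
    (∀ x, 0 ≤ p x) ∧ (∑ x, p x = 1) ∧
    (∀ x, (ω x).PosSemidef ∧ (ω x).trace = 1) ∧
    (∀ x, (τ x).PosSemidef ∧ (τ x).trace = 1) ∧
    σ = ∑ x, p x • (ω x ⊗ₖ τ x)

/-- The twisting unitary `U^t = Σ_{i,j} |i⟩⟨i|_{K_A} ⊗ |j⟩⟨j|_{K_B} ⊗ U^{ij}_{S_AS_B}`,
on the space ordered as `(S_A × K_A) × (K_B × S_B)`. -/
def twist (Uu : κ → κ → Matrix (sa × sb) (sa × sb) ℂ) :
    Matrix ((sa × κ) × (κ × sb)) ((sa × κ) × (κ × sb)) ℂ :=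
  Matrix.of fun p q =>
    (if p.1.2 = q.1.2 then (1 : ℂ) else 0) * (if p.2.1 = q.2.1 then (1 : ℂ) else 0) *
      (Uu p.1.2 p.2.1) (p.1.1, p.2.2) (q.1.1, q.2.2)

/-- The operator `Φ_{K_AK_B} ⊗ I_{S_AS_B}`, where `Φ_{K_AK_B}` is the maximally
entangled state of Schmidt rank `K`, on the space ordered as
`(S_A × K_A) × (K_B × S_B)`. -/
noncomputable def keyProj :
    Matrix ((sa × κ) × (κ × sb)) ((sa × κ) × (κ × sb)) ℂ :=
  Matrix.of fun p q =>
    ((Fintype.card κ : ℂ))⁻¹ *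
      ((if p.1.2 = p.2.1 then (1 : ℂ) else 0) * (if q.1.2 = q.2.1 then (1 : ℂ) else 0)) *
        ((if p.1.1 = q.1.1 then (1 : ℂ) else 0) * (if p.2.2 = q.2.2 then (1 : ℂ) else 0))

/-! ### Auxiliary development -/

/-- The columns of `U^t` restricted to the key-diagonal subspace. -/
def fvec (Uu : κ → κ → Matrix (sa × sb) (sa × sb) ℂ) (y : sa × sb) :
    ((sa × κ) × (κ × sb)) → ℂ :=
  fun p => if p.1.2 = p.2.1 then Uu p.1.2 p.1.2 (p.1.1, p.2.2) y else 0

lemma pi_eq (Uu : κ → κ → Matrix (sa × sb) (sa × sb) ℂ) :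
    twist Uu * keyProj * (twist Uu)ᴴ =
      ((Fintype.card κ : ℂ))⁻¹ • ∑ y, vecMulVec (fvec Uu y) (star (fvec Uu y)) := by
  ext ⟨⟨a, i⟩, ⟨i', b⟩⟩ ⟨⟨a', j⟩, ⟨j', b'⟩⟩
  simp only [apply_ite (star (R := ℂ)), Matrix.mul_apply, conjTranspose_apply, twist, keyProj,
    of_apply, Matrix.smul_apply, Matrix.sum_apply, vecMulVec_apply, fvec, Pi.star_apply,
    Fintype.sum_prod_type, star_mul', star_one, star_zero, smul_eq_mul,
    mul_ite, ite_mul, mul_zero, zero_mul, mul_one, one_mul,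
    Finset.sum_ite_eq, Finset.sum_ite_eq', Finset.mem_univ, if_true,
    Finset.sum_ite_irrel, Finset.sum_const_zero]
  split_ifs with h1 h2
  · subst h1; subst h2
    rw [Finset.mul_sum]
    refine Finset.sum_congr rfl fun x _ => ?_
    rw [Finset.mul_sum]
    refine Finset.sum_congr rfl fun y _ => ?_
    ring
  · rfl
  · rfl

lemma trace_vmv_vmv {n : Type} [Fintype n] (f z : n → ℂ) :
    (vecMulVec f (star f) * vecMulVec z (star z)).trace
      = (star f ⬝ᵥ z) * star (star f ⬝ᵥ z) := by
  simp only [Matrix.trace, Matrix.diag, Matrix.mul_apply, vecMulVec_apply, Pi.star_apply,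
    dotProduct, star_sum, star_mul', star_star, Finset.sum_mul, Finset.mul_sum]
  refine Finset.sum_congr rfl fun p _ => Finset.sum_congr rfl fun q _ => by ring

/-- For a unitary `U`, `Uᴴ.mulVec` preserves the sum of squared norms. -/
lemma sum_sq_mulVec_conjTranspose {n : Type} [Fintype n] [DecidableEq n]
    {U : Matrix n n ℂ} (hU : U ∈ Matrix.unitaryGroup n ℂ) (u : n → ℂ) :
    ∑ y, ‖(Uᴴ.mulVec u) y‖ ^ 2 = ∑ x, ‖u x‖ ^ 2 := by
  have key : ∀ v : n → ℂ, star v ⬝ᵥ v = ((∑ x, ‖v x‖ ^ 2 : ℝ) : ℂ) := by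
    intro v
    push_cast
    simp only [dotProduct, Pi.star_apply]
    refine Finset.sum_congr rfl ?_
    intro x _
    rw [mul_comm, Complex.star_def, Complex.mul_conj, Complex.normSq_eq_norm_sq]
    push_cast
    ring
  have h1 : star (Uᴴ.mulVec u) ⬝ᵥ (Uᴴ.mulVec u) = star u ⬝ᵥ u := by
    rw [Matrix.star_mulVec, Matrix.dotProduct_mulVec, Matrix.vecMul_vecMul,
      conjTranspose_conjTranspose]
    have hUU : U * Uᴴ = 1 := by
      simpa [Matrix.star_eq_conjTranspose] using (Matrix.mem_unitaryGroup_iff.mp hU)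
    rw [hUU, Matrix.vecMul_one]
  have := (key _).symm.trans (h1.trans (key u))
  exact_mod_cast this

open scoped MatrixOrder in
lemma psd_decomp {n : Type} [Fintype n] [DecidableEq n] {A : Matrix n n ℂ}
    (hA : A.PosSemidef) :
    ∃ v : n → n → ℂ, A = ∑ k, vecMulVec (v k) (star (v k)) ∧
      ((∑ k, ∑ p, ‖v k p‖ ^ 2 : ℝ) : ℂ) = A.trace := by
  set S := CFC.sqrt A with hS
  have hherm : Sᴴ = S := (CFC.sqrt_nonneg A).posSemidef.1
  refine ⟨fun k p => S p k, ?_, ?_⟩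
  · ext p q
    have : A p q = (S * S) p q := by rw [CFC.sqrt_mul_sqrt_self A hA.nonneg]
    rw [this, Matrix.mul_apply]
    simp only [Matrix.sum_apply, vecMulVec_apply, Pi.star_apply]
    refine Finset.sum_congr rfl fun k _ => ?_
    have : S k q = star (S q k) := by
      conv_lhs => rw [← hherm]
      simp [conjTranspose_apply]
    rw [this]
  · push_cast
    have : A.trace = (S * S).trace := by rw [CFC.sqrt_mul_sqrt_self A hA.nonneg]
    rw [this, Matrix.trace, Finset.sum_comm]
    simp only [Matrix.diag, Matrix.mul_apply]
    rw [Finset.sum_comm]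
    refine Finset.sum_congr rfl fun k _ => Finset.sum_congr rfl fun p _ => ?_
    have : S k p = star (S p k) := by
      conv_lhs => rw [← hherm]
      simp [conjTranspose_apply]
    rw [this, Complex.star_def, mul_comm, Complex.mul_conj, Complex.normSq_eq_norm_sq]
    push_cast
    ring

lemma kron_vmv {m n : Type} [Fintype m] [Fintype n] (x : m → ℂ) (w : n → ℂ) :
    (vecMulVec x (star x)) ⊗ₖ (vecMulVec w (star w)) =
      vecMulVec (fun p : m × n => x p.1 * w p.2) (star fun p : m × n => x p.1 * w p.2) := by
  ext ⟨p1, p2⟩ ⟨q1, q2⟩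
  simp only [Matrix.kroneckerMap_apply, vecMulVec_apply, Pi.star_apply, star_mul']
  ring

lemma kron_sum {m n κ' ι : Type} [Fintype m] [Fintype n] [Fintype κ'] [Fintype ι]
    (A : κ' → Matrix m m ℂ) (B : ι → Matrix n n ℂ) :
    (∑ k, A k) ⊗ₖ (∑ l, B l) = ∑ k, ∑ l, (A k) ⊗ₖ (B l) := by
  ext ⟨p1, p2⟩ ⟨q1, q2⟩
  simp only [Matrix.kroneckerMap_apply, Matrix.sum_apply]
  rw [Finset.sum_mul_sum]

/-- The inner product of a twisted column with a product vector. -/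
lemma fvec_dot (Uu : κ → κ → Matrix (sa × sb) (sa × sb) ℂ)
    (x : sa × κ → ℂ) (w : κ × sb → ℂ) (y : sa × sb) :
    star (fvec Uu y) ⬝ᵥ (fun p : (sa × κ) × (κ × sb) => x p.1 * w p.2) =
      ∑ i, ((Uu i i)ᴴ.mulVec (fun s : sa × sb => x (s.1, i) * w (i, s.2))) y := by
  simp only [dotProduct, Pi.star_apply, fvec, apply_ite (star (R := ℂ)), star_zero,
    Fintype.sum_prod_type, Matrix.mulVec, conjTranspose_apply, ite_mul, zero_mul,
    Finset.sum_ite_irrel, Finset.sum_const_zero,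
    Finset.sum_ite_eq, Finset.sum_ite_eq', Finset.mem_univ, if_true]
  rw [Finset.sum_comm]

lemma mul_star_self (z : ℂ) : z * star z = ((‖z‖ ^ 2 : ℝ) : ℂ) := by
  rw [Complex.star_def, Complex.mul_conj, Complex.normSq_eq_norm_sq]

/-- The core estimate: the pure product state case. -/
lemma pure_bound (Uu : κ → κ → Matrix (sa × sb) (sa × sb) ℂ)
    (hUu : ∀ i j, Uu i j ∈ Matrix.unitaryGroup (sa × sb) ℂ)
    (x : sa × κ → ℂ) (w : κ × sb → ℂ) :
    (((twist Uu * keyProj * (twist Uu)ᴴ) *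
        vecMulVec (fun p : (sa × κ) × (κ × sb) => x p.1 * w p.2)
          (star fun p : (sa × κ) × (κ × sb) => x p.1 * w p.2)).trace).re ≤
      (Fintype.card κ : ℝ)⁻¹ * ((∑ p, ‖x p‖ ^ 2) * (∑ p, ‖w p‖ ^ 2)) := by
  classical
  set z : (sa × κ) × (κ × sb) → ℂ := fun p => x p.1 * w p.2 with hz
  set c : sa × sb → ℂ := fun y => star (fvec Uu y) ⬝ᵥ z with hc
  have htr : ((twist Uu * keyProj * (twist Uu)ᴴ) * vecMulVec z (star z)).trace
      = (((Fintype.card κ : ℝ)⁻¹ * ∑ y, ‖c y‖ ^ 2 : ℝ) : ℂ) := by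
    rw [pi_eq, Matrix.smul_mul, Matrix.trace_smul, Matrix.sum_mul, Matrix.trace_sum,
      smul_eq_mul]
    push_cast [Finset.mul_sum]
    refine Finset.sum_congr rfl fun y _ => ?_
    rw [trace_vmv_vmv, mul_star_self]
    rw [hc]
    push_cast
    ring
  rw [htr, Complex.ofReal_re]
  have hK : (0:ℝ) ≤ (Fintype.card κ : ℝ)⁻¹ := by positivity
  refine mul_le_mul_of_nonneg_left ?_ hK
  -- work in Euclidean space
  set D : κ → EuclideanSpace ℂ (sa × sb) := fun i =>
    (WithLp.equiv 2 _).symm ((Uu i i)ᴴ.mulVec (fun s : sa × sb => x (s.1, i) * w (i, s.2)))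
    with hD
  have hcy : ∀ y, c y = (∑ i, D i) y := by
    intro y
    rw [hc]
    simp only [hD, WithLp.equiv, Equiv.refl_symm, Equiv.refl_apply]
    rw [fvec_dot]
    rw [WithLp.ofLp_sum, Finset.sum_apply]
    rfl
  have hsum : ∑ y, ‖c y‖ ^ 2 = ‖∑ i, D i‖ ^ 2 := by
    rw [EuclideanSpace.norm_eq, Real.sq_sqrt (by positivity)]
    exact Finset.sum_congr rfl fun y _ => by rw [hcy]
  rw [hsum]
  set α : κ → ℝ := fun i => Real.sqrt (∑ a, ‖x (a, i)‖ ^ 2) with hα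
  set β : κ → ℝ := fun i => Real.sqrt (∑ b, ‖w (i, b)‖ ^ 2) with hβ
  have hDi : ∀ i, ‖D i‖ = α i * β i := by
    intro i
    have h2 : ‖D i‖ ^ 2 = (∑ a, ‖x (a, i)‖ ^ 2) * (∑ b, ‖w (i, b)‖ ^ 2) := by
      rw [EuclideanSpace.norm_eq, Real.sq_sqrt (by positivity)]
      have : ∑ y, ‖(D i) y‖ ^ 2 = ∑ s : sa × sb, ‖x (s.1, i) * w (i, s.2)‖ ^ 2 := by
        simpa [hD, WithLp.equiv] using
          sum_sq_mulVec_conjTranspose (hUu i i) (fun s : sa × sb => x (s.1, i) * w (i, s.2))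
      rw [this, Fintype.sum_prod_type, Finset.sum_mul_sum]
      simp [norm_mul, mul_pow]
    rw [← Real.sqrt_sq (norm_nonneg (D i)), h2, Real.sqrt_mul (by positivity), hα, hβ]
  calc ‖∑ i, D i‖ ^ 2 ≤ (∑ i, ‖D i‖) ^ 2 := by
        have := norm_sum_le (Finset.univ) D
        exact pow_le_pow_left₀ (norm_nonneg _) this 2
    _ = (∑ i, α i * β i) ^ 2 := by rw [Finset.sum_congr rfl fun i _ => hDi i]
    _ ≤ (∑ i, α i ^ 2) * (∑ i, β i ^ 2) := Finset.sum_mul_sq_le_sq_mul_sq _ _ _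
    _ = (∑ p, ‖x p‖ ^ 2) * (∑ p, ‖w p‖ ^ 2) := by
        have hα2 : ∀ i, α i ^ 2 = ∑ a, ‖x (a, i)‖ ^ 2 := fun i =>
          Real.sq_sqrt (by positivity)
        have hβ2 : ∀ i, β i ^ 2 = ∑ b, ‖w (i, b)‖ ^ 2 := fun i =>
          Real.sq_sqrt (by positivity)
        congr 1
        · rw [Finset.sum_congr rfl fun i _ => hα2 i, Fintype.sum_prod_type,
            Finset.sum_comm]
        · rw [Finset.sum_congr rfl fun i _ => hβ2 i, Fintype.sum_prod_type]

lemma prod_bound (Uu : κ → κ → Matrix (sa × sb) (sa × sb) ℂ)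
    (hUu : ∀ i j, Uu i j ∈ Matrix.unitaryGroup (sa × sb) ℂ)
    {ω : Matrix (sa × κ) (sa × κ) ℂ} {τ : Matrix (κ × sb) (κ × sb) ℂ}
    (hω : ω.PosSemidef) (hω1 : ω.trace = 1) (hτ : τ.PosSemidef) (hτ1 : τ.trace = 1) :
    (((twist Uu * keyProj * (twist Uu)ᴴ) * (ω ⊗ₖ τ)).trace).re ≤
      1 / (Fintype.card κ : ℝ) := by
  obtain ⟨v, hv, hvtr⟩ := psd_decomp hω
  obtain ⟨u, hu, hutr⟩ := psd_decomp hτ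
  have hvtr' : ∑ k, ∑ p, ‖v k p‖ ^ 2 = 1 := by
    have := hvtr.trans hω1; exact_mod_cast this
  have hutr' : ∑ l, ∑ p, ‖u l p‖ ^ 2 = 1 := by
    have := hutr.trans hτ1; exact_mod_cast this
  rw [hv, hu, kron_sum]
  simp only [Matrix.mul_sum, Matrix.trace_sum, Complex.re_sum]
  calc ∑ k, ∑ l, (((twist Uu * keyProj * (twist Uu)ᴴ) *
          ((vecMulVec (v k) (star (v k))) ⊗ₖ (vecMulVec (u l) (star (u l))))).trace).re
      ≤ ∑ k, ∑ l, (Fintype.card κ : ℝ)⁻¹ *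
          ((∑ p, ‖v k p‖ ^ 2) * (∑ p, ‖u l p‖ ^ 2)) := by
        refine Finset.sum_le_sum fun k _ => Finset.sum_le_sum fun l _ => ?_
        rw [kron_vmv]
        exact pure_bound Uu hUu (v k) (u l)
    _ = 1 / (Fintype.card κ : ℝ) := by
        simp only [← Finset.mul_sum, ← Finset.sum_mul]
        rw [hvtr', hutr', one_div]
        ring

/-- Privacy test soundness against separable attack: for the privacy test
operator `Π^γ = U^t (Φ_{K_AK_B} ⊗ I_{S_AS_B}) U^{t†}` of a bipartite private
state with twisting unitary `U^t`, every separable state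
`σ ∈ SEP(S_AK_A : K_BS_B)` satisfies `Tr(Π^γ σ) ≤ 1/K`. -/
theorem privacy_test_separable_bound
    (Uu : κ → κ → Matrix (sa × sb) (sa × sb) ℂ)
    (hUu : ∀ i j, Uu i j ∈ Matrix.unitaryGroup (sa × sb) ℂ)
    (σ : Matrix ((sa × κ) × (κ × sb)) ((sa × κ) × (κ × sb)) ℂ)
    (hσ : IsSeparableState σ) :
    (((twist Uu * keyProj * (twist Uu)ᴴ) * σ).trace).re ≤
      1 / (Fintype.card κ : ℝ) := by
  obtain ⟨m, p, ω, τ, hp0, hp1, hω, hτ, hs⟩ := hσ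
  rw [hs]
  simp only [Matrix.mul_sum, Matrix.trace_sum, Complex.re_sum, Matrix.mul_smul,
    Matrix.trace_smul, Complex.real_smul, Complex.re_ofReal_mul]
  calc ∑ x, p x * (((twist Uu * keyProj * (twist Uu)ᴴ) * (ω x ⊗ₖ τ x)).trace).re
      ≤ ∑ x, p x * (1 / (Fintype.card κ : ℝ)) := by
        refine Finset.sum_le_sum fun x _ => ?_
        exact mul_le_mul_of_nonneg_left
          (prod_bound Uu hUu (hω x).1 (hω x).2 (hτ x).1 (hτ x).2) (hp0 x)
    _ = 1 / (Fintype.card κ : ℝ) := by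
        rw [← Finset.sum_mul, hp1, one_mul]
end
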